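/- arXiv:2601.20600 — 10 statements merged into one kernel-verified Lean document; each statement's English description precedes it below -/
import Mathlib

section
/- Let C be an [n,k] linear code over F_q with generator matrix G. Then C is an LCD code (i.e., Hull(C) = {0}) if and only if the k×k matrix G·Gᵀ is invertible. -/
open Matrix

variable {F : Type*} [Field F]

/-- Row space of a matrix: the code generated by its rows. -/
def rowSpace {m ι : Type*} (G : Matrix m ι F) : Submodule F (ι → F) :=
  Submodule.span F (Set.range G)

/-- Dual of a code with respect to the form `⟨x, c⟩ = ∑ i, x i * s (c i)`.
For `s = id` this is the Euclidean dual; for `s = (· ^ q)` the Hermitian dual. -/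
def sDual {ι : Type*} [Fintype ι] (s : F → F) (C : Submodule F (ι → F)) :
    Submodule F (ι → F) where
  carrier := {x | ∀ c ∈ C, ∑ i, x i * s (c i) = 0}
  zero_mem' := by intro c hc; simp
  add_mem' := by
    intro a b ha hb c hc
    simp [Pi.add_apply, add_mul, Finset.sum_add_distrib, ha c hc, hb c hc]
  smul_mem' := by
    intro r a ha c hc
    simp [Pi.smul_apply, smul_eq_mul, mul_assoc, ← Finset.mul_sum, ha c hc]

/-- The hull of a code: its intersection with its dual. -/
def sHull {ι : Type*} [Fintype ι] (s : F → F) (C : Submodule F (ι → F)) :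
    Submodule F (ι → F) :=
  C ⊓ sDual s C

/-- `Ct` is an LCD embedding of `C`: `Ct` is LCD and puncturing `Ct` on the
complement of some coordinate subset recovers `C`. -/
def IsLCDEmbedding {ι : Type*} [Fintype ι] {N : ℕ} (s : F → F)
    (C : Submodule F (ι → F)) (Ct : Submodule F (Fin N → F)) : Prop :=
  sHull s Ct = ⊥ ∧ ∃ f : ι → Fin N, Function.Injective f ∧
    Submodule.map (LinearMap.funLeft F F f) Ct = C

lemma aux_vecMul_eq_sum {n k : ℕ} (G : Matrix (Fin k) (Fin n) F) (y : Fin k → F) :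
    y ᵥ* G = ∑ i, y i • G i := by
  funext j
  simp [Matrix.vecMul, dotProduct, Finset.sum_apply]

lemma aux_mem_rowSpace {n k : ℕ} (G : Matrix (Fin k) (Fin n) F) (x : Fin n → F) :
    x ∈ rowSpace G ↔ ∃ y, y ᵥ* G = x := by
  rw [rowSpace]
  erw [Submodule.mem_span_range_iff_exists_fun]
  simp_rw [aux_vecMul_eq_sum]

lemma aux_vecMul_GGT {n k : ℕ} (G : Matrix (Fin k) (Fin n) F) (y : Fin k → F) (i : Fin k) :
    (y ᵥ* (G * Gᵀ)) i = ∑ j, (y ᵥ* G) j * G i j := by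
  rw [← Matrix.vecMul_vecMul]
  simp [Matrix.vecMul, dotProduct, Matrix.transpose]

/-- LCD iff `G * Gᵀ` is invertible. -/
theorem stmt1 {F : Type*} [Field F] [Fintype F] {n k : ℕ}
    {C : Submodule F (Fin n → F)} (G : Matrix (Fin k) (Fin n) F)
    (hGC : rowSpace G = C) (hG : LinearIndependent F G) :
    sHull (id : F → F) C = ⊥ ↔ IsUnit (G * Gᵀ) := by
  subst hGC
  constructor
  · intro h
    rw [Matrix.isUnit_iff_isUnit_det, isUnit_iff_ne_zero]
    intro hdet
    obtain ⟨y, hy0, hy⟩ := Matrix.exists_vecMul_eq_zero_iff.2 hdet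
    -- v := y ᵥ* G is in the hull
    have hvC : y ᵥ* G ∈ rowSpace G := (aux_mem_rowSpace G _).2 ⟨y, rfl⟩
    have hvD : y ᵥ* G ∈ sDual (id : F → F) (rowSpace G) := by
      intro c hc
      obtain ⟨z, rfl⟩ := (aux_mem_rowSpace G c).1 hc
      simp only [id]
      have : ∀ i, ∑ j, (y ᵥ* G) j * G i j = 0 := by
        intro i
        rw [← aux_vecMul_GGT, hy]
        rfl
      calc ∑ j, (y ᵥ* G) j * (z ᵥ* G) j
          = ∑ j, ∑ i, (y ᵥ* G) j * (z i * G i j) := by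
            simp [Matrix.vecMul, dotProduct, Finset.mul_sum]
        _ = ∑ i, z i * ∑ j, (y ᵥ* G) j * G i j := by
            rw [Finset.sum_comm]
            refine Finset.sum_congr rfl fun i _ => ?_
            rw [Finset.mul_sum]
            exact Finset.sum_congr rfl fun j _ => by ring
        _ = 0 := by simp [this]
    have hv : y ᵥ* G = 0 := by
      have hm : y ᵥ* G ∈ sHull (id : F → F) (rowSpace G) := Submodule.mem_inf.2 ⟨hvC, hvD⟩
      rw [h] at hm
      simpa using hm
    have := Fintype.linearIndependent_iff.1 hG y (by rw [← aux_vecMul_eq_sum, hv])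
    exact hy0 (funext this)
  · intro hU
    rw [Submodule.eq_bot_iff]
    rintro v ⟨hvC, hvD⟩
    obtain ⟨y, rfl⟩ := (aux_mem_rowSpace G v).1 hvC
    have hy : y ᵥ* (G * Gᵀ) = 0 := by
      funext i
      rw [aux_vecMul_GGT]
      have := hvD (G i) (Submodule.subset_span ⟨i, rfl⟩)
      simpa using this
    have hy0 : y = 0 := by
      by_contra h0
      rw [Matrix.isUnit_iff_isUnit_det, isUnit_iff_ne_zero] at hU
      exact hU (Matrix.exists_vecMul_eq_zero_iff.1 ⟨y, h0, hy⟩)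
    simp [hy0]
end

section
/- Let G be a k×n matrix over F_3 generating a linear code C. Then the matrix G̃ = [G | G | G | I_k] generates an LCD code of length 3n+k whose puncturing on the last 2n+k coordinates is C. In particular, every ternary linear code has an LCD embedding. -/
open Matrix

variable {F : Type*} [Field F]

/-- `[G | G | G | I_k]` gives an LCD embedding of any ternary code. -/
theorem stmt3 {n k : ℕ} (G : Matrix (Fin k) (Fin n) (ZMod 3)) :
    sHull (id : ZMod 3 → ZMod 3)
        (rowSpace (fromCols (fromCols (fromCols G G) G)
          (1 : Matrix (Fin k) (Fin k) (ZMod 3)))) = ⊥ ∧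
      Submodule.map
        (LinearMap.funLeft (ZMod 3) (ZMod 3)
          ((Sum.inl ∘ Sum.inl ∘ Sum.inl : Fin n → ((Fin n ⊕ Fin n) ⊕ Fin n) ⊕ Fin k)))
        (rowSpace (fromCols (fromCols (fromCols G G) G)
          (1 : Matrix (Fin k) (Fin k) (ZMod 3)))) = rowSpace G := by
  set Gt := fromCols (fromCols (fromCols G G) G)
      (1 : Matrix (Fin k) (Fin k) (ZMod 3)) with hGt
  have hGG : Gt * Gtᵀ = 1 := by
    have h3 : ∀ a : ZMod 3, a + a + a = 0 := by decide
    rw [hGt]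
    simp only [transpose_fromCols, fromCols_mul_fromRows, transpose_one,
      Matrix.mul_one]
    ext i j
    simp [Matrix.add_apply, h3]
  have key : ∀ l j, ∑ i, Gt l i * Gt j i = if l = j then 1 else 0 := by
    intro l j
    have := congrFun (congrFun hGG l) j
    simpa [Matrix.mul_apply, Matrix.one_apply, Matrix.transpose_apply] using this
  constructor
  · rw [eq_bot_iff]
    rintro x ⟨hx1, hx2⟩
    have hx1' : x ∈ Submodule.span (ZMod 3) (Set.range Gt) := hx1
    erw [Submodule.mem_span_range_iff_exists_fun] at hx1'
    obtain ⟨c, hc⟩ := hx1'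
    have hcj : ∀ j, c j = 0 := by
      intro j
      have h := hx2 (Gt j) (Submodule.subset_span ⟨j, rfl⟩)
      simp only [id] at h
      have h' : ∑ l, c l * ∑ i, Gt l i * Gt j i = 0 := by
        rw [← h, ← hc]
        simp only [Finset.sum_apply, Pi.smul_apply, smul_eq_mul, Finset.sum_mul,
          Finset.mul_sum]
        rw [Finset.sum_comm]
        simp [mul_assoc]
      simpa [key] using h'
    have : x = 0 := by rw [← hc]; simp [hcj]
    simp [this]
  · rw [rowSpace, rowSpace, Submodule.map_span]
    congr 1
    erw [← Set.range_comp]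
    apply congrArg
    funext i
    funext j
    rfl
end

section
/- Let C be an [n,k] linear code over F_q with ℓ = dim Hull(C), and let C̃ be an LCD code of length n+m obtained by appending m columns to a generator matrix of C (i.e., C̃ has generator matrix [G | D] for some k×m matrix D, where G generates C). Then m ≥ ℓ. -/
open Matrix

variable {F : Type*} [Field F]

-- Lemma A
lemma sDual_rowSpace {k : ℕ} {κ : Type*} [Fintype κ] (G : Matrix (Fin k) κ F) :
    sDual (id : F → F) (rowSpace G) = LinearMap.ker G.mulVecLin := by
  ext x
  constructor
  · intro hx
    simp only [LinearMap.mem_ker]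
    ext j
    have := hx (G j) (Submodule.subset_span ⟨j, rfl⟩)
    simpa [Matrix.mulVecLin_apply, Matrix.mulVec, dotProduct, mul_comm] using this
  · intro hx c hc
    simp only [LinearMap.mem_ker] at hx
    induction hc using Submodule.span_induction with
    | mem c hcm =>
      obtain ⟨j, rfl⟩ := hcm
      have := congrFun hx j
      simpa [Matrix.mulVecLin_apply, Matrix.mulVec, dotProduct, mul_comm] using this
    | zero => simp
    | add a b _ _ ha hb =>
      simp only [id_eq] at ha hb
      simp [mul_add, Finset.sum_add_distrib, ha, hb]
    | smul r a _ ha =>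
      simp only [id] at *
      simp [Pi.smul_apply, smul_eq_mul, mul_left_comm, ← Finset.mul_sum, ha]

lemma vecMulLinear_injective {k : ℕ} {κ : Type*} [Fintype κ] {G : Matrix (Fin k) κ F}
    (hG : LinearIndependent F G) : Function.Injective G.vecMulLinear := by
  rw [← LinearMap.ker_eq_bot]
  replace hG := Fintype.linearIndependent_iff.mp hG
  ext v
  simp only [LinearMap.mem_ker, Submodule.mem_bot, Matrix.vecMulLinear_apply]
  constructor
  · intro h
    funext j
    refine hG v ?_ j
    rw [← h]
    ext i
    simp [Matrix.vecMul, dotProduct, Finset.sum_apply, Pi.smul_apply, smul_eq_mul]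
  · rintro rfl; simp

-- Lemma B
lemma sHull_rowSpace {k : ℕ} {κ : Type*} [Fintype κ] (G : Matrix (Fin k) κ F) :
    sHull (id : F → F) (rowSpace G)
      = Submodule.map G.vecMulLinear (LinearMap.ker (G * Gᵀ).mulVecLin) := by
  have hrs : rowSpace G = LinearMap.range G.vecMulLinear := (range_vecMulLinear G).symm
  unfold sHull
  rw [sDual_rowSpace, hrs]
  ext x
  simp only [Submodule.mem_inf, Submodule.mem_map, LinearMap.mem_ker, LinearMap.mem_range]
  have key : ∀ v, (G * Gᵀ).mulVecLin v = G.mulVecLin (G.vecMulLinear v) := fun v => by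
    simp [Matrix.mulVecLin_apply, Matrix.vecMulLinear_apply, ← Matrix.mulVec_mulVec,
      Matrix.mulVec_transpose]
  constructor
  · rintro ⟨⟨v, rfl⟩, hx⟩
    refine ⟨v, ?_, rfl⟩
    rw [key, hx]
  · rintro ⟨v, hv, rfl⟩
    refine ⟨⟨v, rfl⟩, ?_⟩
    rw [key] at hv
    exact hv

/-- any LCD code `[G | D]` extending `C` needs at least `ℓ = dim Hull(C)` extra
columns. -/
theorem stmt5 {F : Type*} [Field F] [Fintype F] {n k m ℓ : ℕ}
    {C : Submodule F (Fin n → F)} (G : Matrix (Fin k) (Fin n) F)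
    (hGC : rowSpace G = C) (hG : LinearIndependent F G)
    (hl : ℓ = Module.finrank F ↥(sHull (id : F → F) C))
    (D : Matrix (Fin k) (Fin m) F)
    (hLCD : sHull (id : F → F) (rowSpace (fromCols G D)) = ⊥) :
    ℓ ≤ m := by
  subst hGC
  set A := G * Gᵀ with hA
  set M := fromCols G D with hM
  -- ℓ = finrank ker A.mulVecLin
  have hl' : ℓ = Module.finrank F ↥(LinearMap.ker A.mulVecLin) := by
    rw [hl, sHull_rowSpace]
    exact (LinearEquiv.finrank_eq
      (Submodule.equivMapOfInjective _ (vecMulLinear_injective hG) _)).symm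
  -- M rows independent
  have hMind : LinearIndependent F M := by
    replace hG := Fintype.linearIndependent_iff.mp hG
    apply Fintype.linearIndependent_iff.mpr
    intro g hg
    refine hG g ?_
    funext i
    have := congrFun hg (Sum.inl i)
    simpa [hM, Finset.sum_apply, Pi.smul_apply, smul_eq_mul] using this
  -- LCD ⟹ ker (M Mᵀ) = ⊥
  have hker : LinearMap.ker (M * Mᵀ).mulVecLin = ⊥ := by
    rw [sHull_rowSpace] at hLCD
    rw [eq_bot_iff]
    intro v hv
    have hmem : M.vecMulLinear v ∈ Submodule.map M.vecMulLinear
        (LinearMap.ker (M * Mᵀ).mulVecLin) := ⟨v, hv, rfl⟩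
    rw [hLCD, Submodule.mem_bot] at hmem
    have := vecMulLinear_injective hMind (a₁ := v) (a₂ := 0) (by simpa using hmem)
    simpa using this
  -- rank (M Mᵀ) = k
  have hrankB : (M * Mᵀ).rank = k := by
    have := LinearMap.finrank_range_add_finrank_ker (M * Mᵀ).mulVecLin
    rw [hker] at this
    simpa [Matrix.rank, Module.finrank_pi] using this
  -- rank A + ℓ = k
  have hrankA : A.rank + ℓ = k := by
    have := LinearMap.finrank_range_add_finrank_ker A.mulVecLin
    rw [← hl'] at this
    simpa [Matrix.rank, Module.finrank_pi] using this
  -- M Mᵀ = A + D Dᵀ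
  have hMMt : M * Mᵀ = A + D * Dᵀ := by
    rw [hM, Matrix.transpose_fromCols, Matrix.fromCols_mul_fromRows, hA]
  -- rank subadditivity
  have hsub : (M * Mᵀ).rank ≤ A.rank + (D * Dᵀ).rank := by
    rw [hMMt]
    have hrange : LinearMap.range (A + D * Dᵀ).mulVecLin
        ≤ LinearMap.range A.mulVecLin ⊔ LinearMap.range (D * Dᵀ).mulVecLin := by
      rintro x ⟨v, rfl⟩
      rw [Matrix.mulVecLin_add]
      exact Submodule.add_mem_sup ⟨v, rfl⟩ ⟨v, rfl⟩
    calc (A + D * Dᵀ).rank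
        ≤ Module.finrank F ↥(LinearMap.range A.mulVecLin ⊔ LinearMap.range (D * Dᵀ).mulVecLin) :=
          Submodule.finrank_mono hrange
      _ ≤ A.rank + (D * Dᵀ).rank := Submodule.finrank_add_le_finrank_add_finrank _ _
  have hDD : (D * Dᵀ).rank ≤ m := le_trans (Matrix.rank_mul_le_left D Dᵀ)
    (le_trans D.rank_le_card_width (by simp))
  omega
end

section
/- Let C be an [n,k] linear code over F_q with ℓ = dim Hull(C). Write a generator matrix of C as G' = [H; A] where H is an ℓ×n generator matrix of Hull(C) and A is a (k−ℓ)×n matrix. Then the (n+ℓ)-column matrix [[H, I_ℓ],[A, 0]] (appending the ℓ×ℓ identity to the hull rows and zero columns to the remaining rows) generates an LCD code. Consequently, the minimal length of an LCD embedding of C is exactly n+ℓ. -/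
open Matrix

variable {F : Type*} [Field F]

lemma mem_sDual {ι : Type*} [Fintype ι] {C : Submodule F (ι → F)} {x : ι → F} :
    x ∈ sDual (id : F → F) C ↔ ∀ c ∈ C, ∑ i, x i * c i = 0 := Iff.rfl

/-- Orthogonality to generators gives membership in the dual. -/
lemma mem_sDual_span {ι m : Type*} [Fintype ι] [Fintype m] (v : m → ι → F) (x : ι → F)
    (h : ∀ j, ∑ i, x i * v j i = 0) :
    x ∈ sDual (id : F → F) (Submodule.span F (Set.range v)) := by
  intro c hc
  let φ : (ι → F) →ₗ[F] F :=
    { toFun := fun c => ∑ i, x i * c i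
      map_add' := by intro u w; simp [mul_add, Finset.sum_add_distrib]
      map_smul' := by intro r u; simp [Finset.mul_sum, mul_left_comm] }
  have hle : Submodule.span F (Set.range v) ≤ LinearMap.ker φ := by
    rw [Submodule.span_le]
    rintro _ ⟨j, rfl⟩
    exact h j
  simpa [φ] using hle hc

lemma part1 {n k ℓ : ℕ} {C : Submodule F (Fin n → F)}
    (H : Matrix (Fin ℓ) (Fin n) F) (A : Matrix (Fin (k - ℓ)) (Fin n) F)
    (hH : rowSpace H = sHull (id : F → F) C)
    (hC : rowSpace (fromRows H A) = C)
    (hind : LinearIndependent F (fromRows H A)) :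
    sHull (id : F → F)
        (rowSpace (fromBlocks H (1 : Matrix (Fin ℓ) (Fin ℓ) F) A 0)) = ⊥ := by
  set Gt : Matrix (Fin ℓ ⊕ Fin (k - ℓ)) (Fin n ⊕ Fin ℓ) F :=
    fromBlocks H (1 : Matrix (Fin ℓ) (Fin ℓ) F) A 0 with hGt
  have hHrow : ∀ a, H a ∈ sHull (id : F → F) C := by
    intro a; rw [← hH]; exact Submodule.subset_span ⟨a, rfl⟩
  have hArow : ∀ b, A b ∈ C := by
    intro b; rw [← hC]
    exact Submodule.subset_span ⟨Sum.inr b, by ext i; simp⟩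
  have hHC : ∀ a, H a ∈ C := fun a => (hHrow a).1
  have hHD : ∀ a, H a ∈ sDual (id : F → F) C := fun a => (hHrow a).2
  have hHH : ∀ a a', ∑ i, H a i * H a' i = 0 := fun a a' => hHD a (H a') (hHC a')
  have hHA : ∀ a b, ∑ i, H a i * A b i = 0 := fun a b => hHD a (A b) (hArow b)
  have hAH : ∀ b a, ∑ i, A b i * H a i = 0 := by
    intro b a
    rw [show (∑ i, A b i * H a i) = ∑ i, H a i * A b i from
      Finset.sum_congr rfl fun i _ => mul_comm _ _]
    exact hHA a b
  rw [eq_bot_iff]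
  rintro x ⟨hx1, hx2⟩
  obtain ⟨c, rfl⟩ := (Submodule.mem_span_range_iff_exists_fun F).mp hx1
  -- the key equations: orthogonality against each row of Gt
  have key : ∀ j' : Fin ℓ ⊕ Fin (k - ℓ),
      ∑ j, c j * ∑ i, Gt j i * Gt j' i = 0 := by
    intro j'
    calc ∑ j, c j * ∑ i, Gt j i * Gt j' i
        = ∑ j, ∑ i, c j * (Gt j i * Gt j' i) := by simp only [Finset.mul_sum]
      _ = ∑ i, ∑ j, c j * (Gt j i * Gt j' i) := Finset.sum_comm
      _ = ∑ i, (∑ j, c j • Gt j) i * id (Gt j' i) := by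
            simp only [Finset.sum_apply, Pi.smul_apply, smul_eq_mul, Finset.sum_mul,
              mul_assoc, id_eq]
      _ = 0 := hx2 (Gt j') (Submodule.subset_span ⟨j', rfl⟩)
  -- rows of H-part coefficients vanish
  have hcl : ∀ a, c (Sum.inl a) = 0 := by
    intro a'
    have := key (Sum.inl a')
    rw [Fintype.sum_sum_type] at this
    have e1 : ∀ a, (∑ i, Gt (Sum.inl a) i * Gt (Sum.inl a') i)
        = if a = a' then 1 else 0 := by
      intro a
      rw [Fintype.sum_sum_type]
      simp [hGt, Matrix.one_apply, hHH a a', Finset.sum_ite_eq]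
    have e2 : ∀ b, (∑ i, Gt (Sum.inr b) i * Gt (Sum.inl a') i) = 0 := by
      intro b
      rw [Fintype.sum_sum_type]
      simp [hGt, hAH b a']
    simp only [e1, e2, mul_ite, mul_one, mul_zero, Finset.sum_ite_eq',
      Finset.mem_univ, if_true, Finset.sum_const_zero, add_zero] at this
    exact this
  -- define y
  set y : Fin n → F := ∑ b, c (Sum.inr b) • A b with hy
  have hyC : y ∈ C := by
    refine Submodule.sum_mem _ fun b _ => Submodule.smul_mem _ _ (hArow b)
  have hyA : ∀ b', ∑ i, y i * A b' i = 0 := by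
    intro b'
    have := key (Sum.inr b')
    rw [Fintype.sum_sum_type] at this
    simp only [hcl, zero_mul, Finset.sum_const_zero, zero_add] at this
    have e3 : ∀ b, (∑ i, Gt (Sum.inr b) i * Gt (Sum.inr b') i)
        = ∑ i, A b i * A b' i := by
      intro b
      rw [Fintype.sum_sum_type]
      simp [hGt]
    rw [← this]
    simp only [e3]
    calc ∑ i, y i * A b' i
        = ∑ i, ∑ b, c (Sum.inr b) * (A b i * A b' i) := by
          simp only [hy, Finset.sum_apply, Pi.smul_apply, smul_eq_mul, Finset.sum_mul,
            mul_assoc]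
      _ = ∑ b, ∑ i, c (Sum.inr b) * (A b i * A b' i) := Finset.sum_comm
      _ = ∑ b, c (Sum.inr b) * ∑ i, A b i * A b' i := by simp only [← Finset.mul_sum]
  have hyH : ∀ a, ∑ i, y i * H a i = 0 := by
    intro a
    rw [show (∑ i, y i * H a i) = ∑ i, H a i * y i from
      Finset.sum_congr rfl fun i _ => mul_comm _ _]
    exact hHD a y hyC
  have hyDual : y ∈ sDual (id : F → F) C := by
    rw [← hC]
    refine mem_sDual_span _ _ ?_
    intro j
    cases j with
    | inl a => simpa using hyH a
    | inr b => simpa using hyA b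
  have hyHull : y ∈ rowSpace H := by rw [hH]; exact ⟨hyC, hyDual⟩
  obtain ⟨d, hd⟩ := (Submodule.mem_span_range_iff_exists_fun F).mp hyHull
  -- linear independence kills everything
  have hrel : ∑ j, (Sum.elim d (fun b => -c (Sum.inr b))) j • fromRows H A j = 0 := by
    rw [Fintype.sum_sum_type]
    have hfl : ∀ x, fromRows H A (Sum.inl x) = H x := fun _ => rfl
    have hfr : ∀ x, fromRows H A (Sum.inr x) = A x := fun _ => rfl
    simp only [Sum.elim_inl, Sum.elim_inr, hfl, hfr, neg_smul]
    rw [Finset.sum_neg_distrib, hd, ← hy]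
    exact add_neg_cancel y
  have hzero := Fintype.linearIndependent_iff.mp hind _ hrel
  have hcr : ∀ b, c (Sum.inr b) = 0 := by
    intro b
    have := hzero (Sum.inr b)
    simpa using this
  have : ∀ j, c j = 0 := by
    intro j; cases j with
    | inl a => exact hcl a
    | inr b => exact hcr b
  simp [this]

lemma part2b {n ℓ N : ℕ} {C : Submodule F (Fin n → F)}
    (hl : ℓ = Module.finrank F ↥(sHull (id : F → F) C))
    (Ct : Submodule F (Fin N → F)) (hCt : IsLCDEmbedding (id : F → F) C Ct) :
    n + ℓ ≤ N := by
  classical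
  obtain ⟨hlcd, f, hf, hmap⟩ := hCt
  set π : (Fin N → F) →ₗ[F] (Fin n → F) := LinearMap.funLeft F F f with hπ
  set W : Submodule F (Fin N → F) := Ct ⊓ Submodule.comap π (sHull (id : F → F) C)
    with hW
  have hmapW : Submodule.map π W = sHull (id : F → F) C := by
    apply le_antisymm
    · rintro _ ⟨v, ⟨hv1, hv2⟩, rfl⟩; exact hv2
    · intro h hh
      have hhC : h ∈ C := hh.1
      rw [← hmap] at hhC
      obtain ⟨v, hv, rfl⟩ := hhC
      exact ⟨v, ⟨hv, hh⟩, rfl⟩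
  have h1 : ℓ ≤ Module.finrank F W := by
    rw [hl, ← hmapW]; exact Submodule.finrank_map_le _ _
  set ψ : W →ₗ[F] ({i : Fin N // i ∉ Set.range f} → F) :=
    (LinearMap.funLeft F F (Subtype.val)).comp W.subtype with hψ
  have hker : ∀ v : W, ψ v = 0 → v = 0 := by
    intro v hv0
    have hvz : ∀ i, i ∉ Set.range f → (v : Fin N → F) i = 0 := by
      intro i hi
      have := congrFun hv0 ⟨i, hi⟩
      simpa [hψ] using this
    have hdual : (v : Fin N → F) ∈ sDual (id : F → F) Ct := by
      intro w hw
      have hzero : ∀ i ∈ Finset.univ, i ∉ Finset.image f Finset.univ →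
          (v : Fin N → F) i * id (w i) = 0 := by
        intro i _ hi
        have : i ∉ Set.range f := by
          simpa [Finset.mem_image, Set.mem_range] using hi
        simp [hvz i this]
      rw [← Finset.sum_subset (Finset.subset_univ _) hzero]
      rw [Finset.sum_image (fun a _ b _ h => hf h)]
      have hπv : π (v : Fin N → F) ∈ sHull (id : F → F) C := v.2.2
      have hπw : π w ∈ C := hmap ▸ Submodule.mem_map_of_mem hw
      have := hπv.2 (π w) hπw
      simpa [hπ, LinearMap.funLeft_apply] using this
    have hvh : (v : Fin N → F) ∈ sHull (id : F → F) Ct := ⟨v.2.1, hdual⟩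
    rw [hlcd, Submodule.mem_bot] at hvh
    exact Subtype.ext hvh
  have hψinj : Function.Injective ψ := by
    rw [← LinearMap.ker_eq_bot]
    exact (Submodule.eq_bot_iff _).mpr fun v hv => hker v hv
  have h2 : Module.finrank F W ≤ N - n := by
    have h3 := LinearMap.finrank_le_finrank_of_injective hψinj
    rw [Module.finrank_fintype_fun_eq_card, Fintype.card_subtype_compl] at h3
    have h4 : Fintype.card {i : Fin N // i ∈ Set.range f} = n := by
      have h5 : Fintype.card {i : Fin N // i ∈ Set.range f} = Fintype.card (Fin n) :=
        (Fintype.card_congr (Equiv.ofInjective f hf)).symm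
      rw [Fintype.card_fin] at h5
      exact h5
    rw [h4] at h3
    simpa using h3
  have h3 : n ≤ N := by
    have := Fintype.card_le_of_injective f hf
    simpa using this
  omega

lemma part2a {n k ℓ : ℕ} {C : Submodule F (Fin n → F)}
    (H : Matrix (Fin ℓ) (Fin n) F) (A : Matrix (Fin (k - ℓ)) (Fin n) F)
    (hH : rowSpace H = sHull (id : F → F) C)
    (hC : rowSpace (fromRows H A) = C)
    (hind : LinearIndependent F (fromRows H A)) :
    ∃ Ct : Submodule F (Fin (n + ℓ) → F), IsLCDEmbedding (id : F → F) C Ct := by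
  set Gt : Matrix (Fin ℓ ⊕ Fin (k - ℓ)) (Fin n ⊕ Fin ℓ) F :=
    fromBlocks H (1 : Matrix (Fin ℓ) (Fin ℓ) F) A 0 with hGt
  set e : Fin (n + ℓ) → Fin n ⊕ Fin ℓ := ⇑(finSumFinEquiv (m := n) (n := ℓ)).symm with he
  refine ⟨Submodule.map (LinearMap.funLeft F F e) (rowSpace Gt), ?_, ?_⟩
  · rw [eq_bot_iff]
    rintro x ⟨hx1, hx2⟩
    obtain ⟨ξ, hξ, rfl⟩ := hx1
    have hdual : ξ ∈ sDual (id : F → F) (rowSpace Gt) := by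
      intro c hc
      have h2 := hx2 (LinearMap.funLeft F F e c) (Submodule.mem_map_of_mem hc)
      rw [← h2]
      refine (Fintype.sum_equiv (finSumFinEquiv (m := n) (n := ℓ)).symm _ _ fun i => ?_).symm
      simp [he, LinearMap.funLeft_apply]
    have h0 : ξ ∈ (⊥ : Submodule F (Fin n ⊕ Fin ℓ → F)) := by
      rw [← part1 H A hH hC hind]; exact ⟨hξ, hdual⟩
    rw [Submodule.mem_bot] at h0
    subst h0
    simp
  · refine ⟨fun j => finSumFinEquiv (Sum.inl j),
      finSumFinEquiv.injective.comp Sum.inl_injective, ?_⟩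
    rw [← Submodule.map_comp, ← LinearMap.funLeft_comp]
    have hcomp : (e ∘ fun j => finSumFinEquiv (Sum.inl j)) = Sum.inl := by
      funext j; simp [he]
    rw [hcomp]
    rw [rowSpace, Submodule.map_span]
    rw [show ⇑(LinearMap.funLeft F F (Sum.inl : Fin n → Fin n ⊕ Fin ℓ)) '' Set.range Gt =
      Set.range (⇑(LinearMap.funLeft F F (Sum.inl : Fin n → Fin n ⊕ Fin ℓ)) ∘ Gt) from
      (Set.range_comp _ _).symm]
    have : (LinearMap.funLeft F F (Sum.inl : Fin n → Fin n ⊕ Fin ℓ)) ∘ Gt = fromRows H A := by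
      funext j i
      cases j <;> rfl
    rw [this, ← rowSpace, hC]


/-- `[[H, I_ℓ], [A, 0]]` generates an LCD code, and the minimal length of an LCD
embedding of `C` is exactly `n + ℓ`. -/
theorem stmt6 {F : Type*} [Field F] [Fintype F] {n k ℓ : ℕ}
    {C : Submodule F (Fin n → F)}
    (H : Matrix (Fin ℓ) (Fin n) F) (A : Matrix (Fin (k - ℓ)) (Fin n) F)
    (hH : rowSpace H = sHull (id : F → F) C)
    (hC : rowSpace (fromRows H A) = C)
    (hind : LinearIndependent F (fromRows H A))
    (hl : ℓ = Module.finrank F ↥(sHull (id : F → F) C)) :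
    sHull (id : F → F)
        (rowSpace (fromBlocks H (1 : Matrix (Fin ℓ) (Fin ℓ) F) A 0)) = ⊥ ∧
      IsLeast {N : ℕ | ∃ Ct : Submodule F (Fin N → F),
        IsLCDEmbedding (id : F → F) C Ct} (n + ℓ) := by
  refine ⟨part1 H A hH hC hind, part2a H A hH hC hind, ?_⟩
  rintro N ⟨Ct, hCt⟩
  exact part2b hl Ct hCt
end

section
/- Let C̃ be an LCD code of length n+ℓ with generator matrix of block form [[H, D],[A, C]] where [H; A] is k×n, H is ℓ×n and generates Hull of the punctured code (the code generated by [H; A]), D is ℓ×ℓ, and C is (k−ℓ)×ℓ. Then D is invertible. -/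
open Matrix

variable {F : Type*} [Field F]

lemma vecMul_mem_rowSpace {m ι : Type*} [Fintype m] (G : Matrix m ι F) (v : m → F) :
    v ᵥ* G ∈ rowSpace G := by
  have : v ᵥ* G = ∑ i, v i • G i := by
    ext j
    simp [Matrix.vecMul, dotProduct, Finset.sum_apply]
  rw [this]
  exact Submodule.sum_mem _ fun i _ =>
    Submodule.smul_mem _ _ (Submodule.subset_span ⟨i, rfl⟩)

/-- in a shortest LCD embedding `[[H, D], [A, Cm]]` the block `D` is invertible. -/
theorem stmt8 {F : Type*} [Field F] [Fintype F] {n ℓ a : ℕ}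
    (H : Matrix (Fin ℓ) (Fin n) F) (A : Matrix (Fin a) (Fin n) F)
    (D : Matrix (Fin ℓ) (Fin ℓ) F) (Cm : Matrix (Fin a) (Fin ℓ) F)
    (hind : LinearIndependent F (fromBlocks H D A Cm))
    (hH : rowSpace H = sHull (id : F → F) (rowSpace (fromRows H A)))
    (hLCD : sHull (id : F → F) (rowSpace (fromBlocks H D A Cm)) = ⊥) :
    IsUnit D := by
  rw [Matrix.isUnit_iff_isUnit_det, isUnit_iff_ne_zero]
  intro hdet
  obtain ⟨u, hu, huD⟩ := (Matrix.exists_vecMul_eq_zero_iff).2 hdet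
  set M := fromBlocks H D A Cm with hM
  set v : Fin ℓ ⊕ Fin a → F := Sum.elim u 0 with hv
  set w : Fin n ⊕ Fin ℓ → F := v ᵥ* M with hw
  -- compute w
  have hwval : w = Sum.elim (u ᵥ* H) 0 := by
    rw [hw, hM, Matrix.vecMul_fromBlocks]
    have h1 : v ∘ Sum.inl = u := rfl
    have h2 : v ∘ Sum.inr = (0 : Fin a → F) := rfl
    rw [h1, h2, Matrix.zero_vecMul, Matrix.zero_vecMul, add_zero, add_zero, huD]
  -- u ᵥ* H is in the hull of rowSpace (fromRows H A)
  have hmem : u ᵥ* H ∈ sHull (id : F → F) (rowSpace (fromRows H A)) := by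
    rw [← hH]; exact vecMul_mem_rowSpace H u
  have hdual := hmem.2
  -- w ∈ sDual of rowSpace M : check on generators then span induction
  have hgen : ∀ r ∈ Set.range M, ∑ i, w i * r i = 0 := by
    rintro r ⟨i, rfl⟩
    have key : ∀ c : Fin n → F, c ∈ rowSpace (fromRows H A) →
        ∀ d : Fin ℓ → F, ∑ i, w i * Sum.elim c d i = 0 := by
      intro c hc d
      rw [hwval, Fintype.sum_sum_type]
      simpa using hdual c hc
    cases i with
    | inl j =>
        have : M (Sum.inl j) = Sum.elim (H j) (D j) := by
          ext x; cases x <;> rfl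
        rw [this]
        exact key _ (Submodule.subset_span ⟨Sum.inl j, rfl⟩) _
    | inr j =>
        have : M (Sum.inr j) = Sum.elim (A j) (Cm j) := by
          ext x; cases x <;> rfl
        rw [this]
        exact key _ (Submodule.subset_span ⟨Sum.inr j, rfl⟩) _
  have hwdual : w ∈ sDual (id : F → F) (rowSpace M) := by
    intro c hc
    induction hc using Submodule.span_induction with
    | mem x hx => exact hgen x hx
    | zero => simp
    | add x y _ _ hx hy =>
        simp only [Pi.add_apply, id, mul_add, Finset.sum_add_distrib]
        simp only [id] at hx hy
        rw [hx, hy, add_zero]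
    | smul r x _ hx =>
        simp only [Pi.smul_apply, smul_eq_mul, id] at hx ⊢
        simp only [show ∀ i, w i * (r * x i) = r * (w i * x i) from fun i => by ring,
          ← Finset.mul_sum, hx, mul_zero]
  -- hence w = 0
  have hw0 : w = 0 := by
    have : w ∈ sHull (id : F → F) (rowSpace M) := ⟨vecMul_mem_rowSpace M v, hwdual⟩
    rw [hLCD] at this
    exact this
  -- linear independence gives v = 0, contradicting u ≠ 0
  have hvM : v ᵥ* M = 0 := hw0
  have hsum : ∑ i, v i • M i = 0 := by
    rw [← hvM]; ext j
    simp [Matrix.vecMul, dotProduct, Finset.sum_apply]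
  have := (Fintype.linearIndependent_iff.mp hind) v hsum
  apply hu
  ext j
  simpa [hv] using this (Sum.inl j)
end

section
/- Let C be an [n,k] linear code over F_q with hull of dimension ℓ, with generator matrix [H; A] where H (ℓ×n) generates Hull(C). Let D be any invertible ℓ×ℓ matrix and C' any (k−ℓ)×ℓ matrix. Then the matrix G̃ = [[H, D],[A, C']] generates an LCD code of length n+ℓ, hence a shortest LCD embedding of C. -/
open Matrix

variable {F : Type*} [Field F]

/-- appending an invertible `D` to the hull rows and any `C'` to the rest yields a
(shortest) LCD embedding. -/
theorem stmt10 {F : Type*} [Field F] [Fintype F] {n k ℓ : ℕ}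
    {C : Submodule F (Fin n → F)}
    (H : Matrix (Fin ℓ) (Fin n) F) (A : Matrix (Fin (k - ℓ)) (Fin n) F)
    (hH : rowSpace H = sHull (id : F → F) C)
    (hC : rowSpace (fromRows H A) = C)
    (hind : LinearIndependent F (fromRows H A))
    (hl : ℓ = Module.finrank F ↥(sHull (id : F → F) C))
    (D : Matrix (Fin ℓ) (Fin ℓ) F) (hD : IsUnit D)
    (C' : Matrix (Fin (k - ℓ)) (Fin ℓ) F) :
    sHull (id : F → F) (rowSpace (fromBlocks H D A C')) = ⊥ ∧
      Submodule.map (LinearMap.funLeft F F (Sum.inl : Fin n → Fin n ⊕ Fin ℓ))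
        (rowSpace (fromBlocks H D A C')) = C := by
  set G : Matrix (Fin ℓ ⊕ Fin (k - ℓ)) (Fin n ⊕ Fin ℓ) F := fromBlocks H D A C' with hGdef
  -- the projection claim
  have hmap : Submodule.map (LinearMap.funLeft F F (Sum.inl : Fin n → Fin n ⊕ Fin ℓ))
      (rowSpace G) = C := by
    unfold rowSpace
    rw [Submodule.map_span, ← Set.range_comp (f := (G : Fin ℓ ⊕ Fin (k - ℓ) → Fin n ⊕ Fin ℓ → F))]
    have : (⇑(LinearMap.funLeft F F (Sum.inl : Fin n → Fin n ⊕ Fin ℓ)) ∘ G)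
        = fromRows H A := by
      funext i j
      cases i <;> rfl
    rw [this]
    exact hC
  refine ⟨?_, hmap⟩
  -- the hull claim
  rw [eq_bot_iff]
  intro x hx
  rw [sHull, Submodule.mem_inf] at hx
  obtain ⟨hx1, hx2⟩ := hx
  simp only [Submodule.mem_bot]
  have hx2' : ∀ c ∈ rowSpace G, ∑ j, x j * c j = 0 := by
    intro c hc
    simpa using hx2 c hc
  have hrow : ∀ i, ∑ j, x j * G i j = 0 := fun i =>
    hx2' (G i) (Submodule.subset_span (Set.mem_range_self i))
  -- x ∘ inl ∈ C
  have hxl : (fun j => x (Sum.inl j)) ∈ C := by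
    rw [← hmap]
    exact ⟨x, hx1, rfl⟩
  -- rows of H are in the dual of C
  have hHhull : ∀ i, H i ∈ sHull (id : F → F) C := by
    intro i
    rw [← hH]
    exact Submodule.subset_span (Set.mem_range_self i)
  have hHdual : ∀ i, ∀ c ∈ C, ∑ j, H i j * c j = 0 := by
    intro i c hc
    have := ((Submodule.mem_inf).mp (hHhull i)).2
    simpa using this c hc
  -- Step B : first, orthogonality with the inl-rows of G
  have hBsum : ∀ i : Fin ℓ,
      (∑ j, x (Sum.inl j) * H i j) + ∑ j, x (Sum.inr j) * D i j = 0 := by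
    intro i
    have := hrow (Sum.inl i)
    rwa [Fintype.sum_sum_type] at this
  have hHx : ∀ i : Fin ℓ, ∑ j, x (Sum.inl j) * H i j = 0 := by
    intro i
    have := hHdual i _ hxl
    simpa [mul_comm] using this
  have hDx : D *ᵥ (fun j => x (Sum.inr j)) = 0 := by
    funext i
    have h1 := hBsum i
    rw [hHx i, zero_add] at h1
    simpa [mulVec, dotProduct, mul_comm] using h1
  have hxr : ∀ j, x (Sum.inr j) = 0 := by
    have h0 : (fun j => x (Sum.inr j)) = 0 := by
      have := congrArg (fun v => D⁻¹ *ᵥ v) hDx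
      simpa [mulVec_mulVec, Matrix.nonsing_inv_mul D ((isUnit_iff_isUnit_det D).mp hD)] using this
    intro j
    exact congrFun h0 j
  -- Step C : x∘inl is orthogonal to rows of A too, hence lies in the hull of C
  have hAx : ∀ i, ∑ j, x (Sum.inl j) * A i j = 0 := by
    intro i
    have := hrow (Sum.inr i)
    rw [Fintype.sum_sum_type] at this
    simp only [hxr, zero_mul, Finset.sum_const_zero, add_zero] at this
    simpa [hGdef] using this
  have hxlHull : (fun j => x (Sum.inl j)) ∈ rowSpace H := by
    rw [hH, sHull, Submodule.mem_inf]
    refine ⟨hxl, ?_⟩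
    intro c hc
    rw [← hC] at hc
    induction hc using Submodule.span_induction with
    | mem c hcmem =>
      obtain ⟨i, rfl⟩ := hcmem
      cases i with
      | inl i => simpa using hHx i
      | inr i => simpa using hAx i
    | zero => simp
    | add c d hc hd ihc ihd =>
      simp only [id_eq] at ihc ihd ⊢
      simp [mul_add, Finset.sum_add_distrib, ihc, ihd]
    | smul r c hc ihc =>
      simp only [id_eq] at ihc ⊢
      have : ∑ i, x (Sum.inl i) * (r • c) i = r * ∑ i, x (Sum.inl i) * c i := by
        rw [Finset.mul_sum]
        exact Finset.sum_congr rfl fun i _ => by simp; ring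
      simp only [this, ihc, mul_zero]
  -- representations of x∘inl and x
  obtain ⟨w, hw0⟩ := (Submodule.mem_span_range_iff_exists_fun F).mp hxlHull
  obtain ⟨c, hc0⟩ := (Submodule.mem_span_range_iff_exists_fun F).mp hx1
  have hw : ∀ j, ∑ i, w i * H i j = x (Sum.inl j) := by
    intro j
    have := congrFun hw0 j
    simpa [Finset.sum_apply] using this
  have hptl : ∀ j, (∑ i : Fin ℓ, c (Sum.inl i) * H i j)
      + ∑ i, c (Sum.inr i) * A i j = x (Sum.inl j) := by
    intro j
    have := congrFun hc0 (Sum.inl j)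
    simpa [Finset.sum_apply, Fintype.sum_sum_type, hGdef] using this
  have hptr : ∀ j, (∑ i : Fin ℓ, c (Sum.inl i) * D i j)
      + ∑ i, c (Sum.inr i) * C' i j = x (Sum.inr j) := by
    intro j
    have := congrFun hc0 (Sum.inr j)
    simpa [Finset.sum_apply, Fintype.sum_sum_type, hGdef] using this
  -- linear independence kills the A-coefficients
  have hg : ∑ i, (Sum.elim (fun i => c (Sum.inl i) - w i) (fun i => c (Sum.inr i))) i
      • (fromRows H A) i = 0 := by
    funext j
    simp only [Finset.sum_apply, Pi.smul_apply, smul_eq_mul, Fintype.sum_sum_type,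
      Sum.elim_inl, Sum.elim_inr, fromRows_apply_inl, fromRows_apply_inr, Pi.zero_apply,
      sub_mul, Finset.sum_sub_distrib]
    linear_combination hptl j - hw j
  have hzero := Fintype.linearIndependent_iff.mp hind _ hg
  have hcinr : ∀ i, c (Sum.inr i) = 0 := fun i => hzero (Sum.inr i)
  -- D invertible kills the H-coefficients
  have hvD : (fun i => c (Sum.inl i)) ᵥ* D = 0 := by
    funext j
    have h1 := hptr j
    simp only [hcinr, zero_mul, Finset.sum_const_zero, add_zero, hxr j] at h1
    simpa [vecMul, dotProduct] using h1
  have hcinl : ∀ i, c (Sum.inl i) = 0 := by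
    have h0 : (fun i => c (Sum.inl i)) = 0 := by
      have := congrArg (fun v => v ᵥ* D⁻¹) hvD
      simpa [vecMul_vecMul, Matrix.mul_nonsing_inv D ((isUnit_iff_isUnit_det D).mp hD)]
        using this
    exact fun i => congrFun h0 i
  -- conclude
  funext j
  cases j with
  | inl j =>
    have := hptl j
    simp only [hcinl, hcinr, zero_mul, Finset.sum_const_zero, add_zero] at this
    simpa using this.symm
  | inr j => exact hxr j
end

section
/- The quaternary simplex code S_{4,r} of parameters [(4^r−1)/3, r, 4^{r−1}] is Hermitian self-orthogonal for all r ≥ 2. -/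
open Matrix

variable {F : Type*} [Field F]

/- ## Auxiliary material -/

local notation "F4" => GaloisField 2 2

noncomputable instance : Fintype (GaloisField 2 2) := Fintype.ofFinite _

theorem F4card : Fintype.card F4 = 4 := by
  rw [← Nat.card_eq_fintype_card, GaloisField.card] <;> norm_num

theorem F4sum1 : ∑ a : F4, a = 0 := by
  have := FiniteField.sum_pow_lt_card_sub_one (K := F4) 1 (by rw [F4card]; norm_num)
  simpa using this

theorem F4two : (2 : F4) = 0 := by
  have := CharP.cast_eq_zero F4 2; exact_mod_cast this

theorem F4three : (3 : F4) = 1 := by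
  rw [show (3 : F4) = 2 + 1 by norm_num, F4two, zero_add]

theorem F4cube (a : (F4)ˣ) : (a : F4) ^ 3 = 1 := by
  have := FiniteField.pow_card_sub_one_eq_one (a : F4) (Units.ne_zero a)
  rwa [F4card] at this

theorem keySum {r : ℕ} (hr : 2 ≤ r) (x y : Fin r) :
    ∑ v : Fin r → F4, v x * (v y) ^ 2 = 0 := by
  rw [← Equiv.sum_comp (Equiv.funSplitAt x F4).symm (fun v => v x * (v y) ^ 2)]
  by_cases hxy : y = x
  · subst hxy
    simp only [Equiv.funSplitAt_symm_apply, dif_pos]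
    rw [Fintype.sum_prod_type]
    have hcard : ((Fintype.card ({ j // j ≠ y } → F4) : F4)) = 0 := by
      rw [Fintype.card_fun, F4card]
      have hne : Fintype.card { j // j ≠ y } ≠ 0 := by
        have : Nontrivial (Fin r) := Fin.nontrivial_iff_two_le.mpr hr
        obtain ⟨j, hj⟩ := exists_ne y
        exact @Fintype.card_ne_zero _ _ ⟨⟨j, hj⟩⟩
      rw [Nat.cast_pow]
      have h4 : ((4 : ℕ) : F4) = 0 := by
        push_cast; rw [show (4 : F4) = 2 * 2 by norm_num, F4two]; ring
      rw [h4, zero_pow hne]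
    simp only [Finset.sum_const, nsmul_eq_mul, Finset.card_univ, hcard, zero_mul,
      Finset.sum_const_zero, mul_zero]
  · simp only [Equiv.funSplitAt_symm_apply, dif_pos, dif_neg hxy]
    rw [Fintype.sum_prod_type]
    simp only [← Finset.mul_sum]
    rw [← Finset.sum_mul, F4sum1, zero_mul]

theorem rowsSum {r : ℕ} (hr : 2 ≤ r) {ι : Type*} [Fintype ι]
    (c : ι → (Fin r → F4)) (hc0 : ∀ i, c i ≠ 0)
    (hproj : ∀ v : Fin r → F4, v ≠ 0 →
      ∃! i : ι, ∃ a : (F4)ˣ, (a : F4) • c i = v)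
    (x y : Fin r) : ∑ i, c i x * (c i y) ^ 2 = 0 := by
  classical
  set f : (Fin r → F4) → F4 := fun v => v x * (v y) ^ 2 with hf
  have hfscale : ∀ (a : (F4)ˣ) (v : Fin r → F4), f ((a : F4) • v) = f v := by
    intro a v
    simp only [hf, Pi.smul_apply, smul_eq_mul]
    calc (a : F4) * v x * ((a : F4) * v y) ^ 2
        = (a : F4) ^ 3 * (v x * (v y) ^ 2) := by ring
      _ = v x * (v y) ^ 2 := by rw [F4cube, one_mul]
  have hferase : ∑ v ∈ Finset.univ.erase 0, f v = 0 := by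
    rw [Finset.sum_erase _ (by simp [hf])]
    exact keySum hr x y
  have hbij : ∑ p : ι × (F4)ˣ, f ((p.2 : F4) • c p.1) = ∑ v ∈ Finset.univ.erase 0, f v := by
    refine Finset.sum_bij (fun p _ => (p.2 : F4) • c p.1) ?_ ?_ ?_ ?_
    · intro p _
      exact Finset.mem_erase.mpr ⟨smul_ne_zero (Units.ne_zero p.2) (hc0 p.1), Finset.mem_univ _⟩
    · rintro ⟨i, a⟩ _ ⟨j, b⟩ _ h
      replace h : (a : F4) • c i = (b : F4) • c j := h
      have hv0 : (a : F4) • c i ≠ 0 := smul_ne_zero (Units.ne_zero a) (hc0 i)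
      obtain ⟨k, -, huniq⟩ := hproj ((a : F4) • c i) hv0
      have hij : i = j := by
        rw [huniq i ⟨a, rfl⟩, huniq j ⟨b, h.symm⟩]
      subst hij
      have hab : (a : F4) = (b : F4) := by
        by_contra hne
        have := sub_smul (a : F4) (b : F4) (c i)
        rw [h, sub_self] at this
        exact hc0 i ((smul_eq_zero.mp this).resolve_left (sub_ne_zero.mpr hne))
      exact Prod.ext rfl (Units.ext hab)
    · intro v hv
      obtain ⟨i, ⟨a, ha⟩, -⟩ := hproj v (Finset.mem_erase.mp hv).1
      refine ⟨(i, a), Finset.mem_univ _, ?_⟩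
      dsimp only
      exact ha
    · intro p _; rfl
  have hsum : ∑ p : ι × (F4)ˣ, f ((p.2 : F4) • c p.1) = ∑ i, f (c i) := by
    simp only [hfscale]
    rw [Fintype.sum_prod_type]
    simp only [Finset.sum_const, nsmul_eq_mul, Finset.card_univ, Fintype.card_units, F4card]
    norm_num
    simp [F4three]
  have : ∑ i, f (c i) = 0 := by rw [← hsum, hbij, hferase]
  simpa [hf] using this

/-- the quaternary simplex code `S_{4,r}` is Hermitian self-orthogonal for
`r ≥ 2`. -/
theorem stmt13 {r : ℕ} (hr : 2 ≤ r) {ι : Type*} [Fintype ι]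
    (c : ι → (Fin r → GaloisField 2 2))
    (hcard : Fintype.card ι = (4 ^ r - 1) / 3)
    (hc0 : ∀ i, c i ≠ 0)
    (hproj : ∀ v : Fin r → GaloisField 2 2, v ≠ 0 →
      ∃! i : ι, ∃ a : (GaloisField 2 2)ˣ, (a : GaloisField 2 2) • c i = v) :
    rowSpace (Matrix.of fun x i => c i x) ≤
      sDual (fun x : GaloisField 2 2 => x ^ 2)
        (rowSpace (Matrix.of fun x i => c i x)) := by
  rw [rowSpace, Submodule.span_le]
  rintro u ⟨x, rfl⟩
  intro v hv
  induction hv using Submodule.span_induction with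
  | mem w hw =>
    obtain ⟨y, rfl⟩ := hw
    simpa [Matrix.of_apply] using rowsSum hr c hc0 hproj x y
  | zero => simp
  | add a b ha hb iha ihb =>
    have : ∀ i : ι, (a + b) i ^ 2 = a i ^ 2 + b i ^ 2 := fun i => CharTwo.add_sq _ _
    simp only [Pi.add_apply] at this ⊢
    simp only [this, mul_add, Finset.sum_add_distrib, iha, ihb, add_zero]
  | smul t w hw ih =>
    simp only [Pi.smul_apply, smul_eq_mul, mul_pow, mul_left_comm, ← Finset.mul_sum, ih, mul_zero]
end

section
/- Let H_{q,r} be the q-ary Hamming code of parameters [(q^r−1)/(q−1), (q^r−1)/(q−1)−r, 3], for q ∈ {2,3,4} (with r ≥ 3 if q=2 and r ≥ 2 otherwise; Hermitian duality for q=4). Then dim Hull(H_{q,r}) = r, and hence the minimal length of an LCD embedding of H_{q,r} is (q^r−1)/(q−1) + r. -/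
open Matrix

variable {F : Type*} [Field F]

set_option synthInstance.maxHeartbeats 1000000
set_option maxHeartbeats 1000000
set_option linter.unusedSectionVars false
set_option linter.unusedVariables false

section Aux

variable {ι : Type*} [Fintype ι]

lemma s14_mem_sDual {s : F → F} {C : Submodule F (ι → F)} {x : ι → F} :
    x ∈ sDual s C ↔ ∀ c ∈ C, ∑ i, x i * s (c i) = 0 := Iff.rfl

lemma s14_conj_sum (σ : F ≃+* F) (hσ : ∀ t, σ (σ t) = t) (x y : ι → F) :
    ∑ i, x i * σ (y i) = σ (∑ i, y i * σ (x i)) := by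
  rw [map_sum]
  exact Finset.sum_congr rfl fun i _ => by rw [_root_.map_mul, hσ, mul_comm]

lemma s14_mem_sDual_span (σ : F ≃+* F) {S : Set (ι → F)} {x : ι → F}
    (h : ∀ g ∈ S, ∑ i, x i * σ (g i) = 0) : x ∈ sDual (⇑σ) (Submodule.span F S) := by
  intro c hc
  induction hc using Submodule.span_induction with
  | mem g hg => exact h g hg
  | zero => simp
  | add a b _ _ ha hb => simp [Pi.add_apply, map_add, mul_add, Finset.sum_add_distrib, ha, hb]
  | smul a c _ hc =>
      have key : ∀ i : ι, x i * σ (a * c i) = σ a * (x i * σ (c i)) := fun i => by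
        rw [_root_.map_mul]; ring
      simp only [Pi.smul_apply, smul_eq_mul]
      rw [Finset.sum_congr rfl fun i _ => key i, ← Finset.mul_sum, hc, mul_zero]

lemma s14_le_sDual_sDual (σ : F ≃+* F) (hσ : ∀ t, σ (σ t) = t) (C : Submodule F (ι → F)) :
    C ≤ sDual ⇑σ (sDual ⇑σ C) := by
  intro c hc x hx
  rw [s14_conj_sum σ hσ c x, hx c hc, map_zero]

lemma s14_finrank_sDual_id_add (C : Submodule F (ι → F)) :
    Module.finrank F ↥(sDual (fun t : F => t) C) + Module.finrank F ↥C = Fintype.card ι := by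
  classical
  have key : ∀ x c : ι → F, (Pi.basisFun F ι).toDual x c = ∑ i, c i * x i := by
    intro x c
    conv_lhs => rw [show c = ∑ i, c i • (Pi.basisFun F ι) i by
      simpa [Pi.basisFun_repr] using ((Pi.basisFun F ι).sum_repr c).symm]
    rw [map_sum]
    exact Finset.sum_congr rfl fun i _ => by
      rw [_root_.map_smul, Module.Basis.toDual_eq_repr, Pi.basisFun_repr, smul_eq_mul]
  have heq : sDual (fun t : F => t) C =
      Submodule.comap ((Pi.basisFun F ι).toDualEquiv : (ι → F) ≃ₗ[F] _).toLinearMap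
        (Submodule.dualAnnihilator C) := by
    ext x
    simp only [Submodule.mem_comap, Submodule.mem_dualAnnihilator, s14_mem_sDual,
      LinearEquiv.coe_coe, Module.Basis.toDualEquiv_apply, key]
    constructor
    · intro h c hc
      simpa [mul_comm] using h c hc
    · intro h c hc
      simpa [mul_comm] using h c hc
  rw [heq]
  rw [Submodule.comap_equiv_eq_map_symm]
  rw [LinearEquiv.finrank_map_eq]
  have h1 : Module.finrank F ((ι → F) ⧸ C) = Module.finrank F ↥(Submodule.dualAnnihilator C) :=
    LinearEquiv.finrank_eq (Subspace.quotEquivAnnihilator C)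
  have h2 := Submodule.finrank_quotient_add_finrank C
  rw [← h1, h2, Module.finrank_fintype_fun_eq_card]

lemma s14_finrank_sDual_add [Fintype F] (σ : F ≃+* F) (hσ : ∀ t, σ (σ t) = t)
    (C : Submodule F (ι → F)) :
    Module.finrank F ↥(sDual ⇑σ C) + Module.finrank F ↥C = Fintype.card ι := by
  classical
  have mem1 : ∀ x : ι → F, x ∈ sDual ⇑σ C → (fun i => σ (x i)) ∈ sDual (fun t : F => t) C := by
    intro x hx c hc
    simp only []
    have : ∑ i, σ (x i) * c i = ∑ i, c i * σ (x i) := by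
      exact Finset.sum_congr rfl fun i _ => mul_comm _ _
    rw [this, s14_conj_sum σ hσ c x, hx c hc, map_zero]
  have mem2 : ∀ x : ι → F, x ∈ sDual (fun t : F => t) C → (fun i => σ (x i)) ∈ sDual ⇑σ C := by
    intro x hx c hc
    have : ∑ i, σ (x i) * σ (c i) = σ (∑ i, x i * c i) := by
      rw [map_sum]; exact Finset.sum_congr rfl fun i _ => (map_mul σ _ _).symm
    rw [this, hx c hc, map_zero]
  have e : ↥(sDual ⇑σ C) ≃ ↥(sDual (fun t : F => t) C) :=
    { toFun := fun x => ⟨fun i => σ (x.1 i), mem1 x.1 x.2⟩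
      invFun := fun y => ⟨fun i => σ (y.1 i), mem2 y.1 y.2⟩
      left_inv := fun x => Subtype.ext (funext fun i => hσ _)
      right_inv := fun y => Subtype.ext (funext fun i => hσ _) }
  have hcard := Fintype.card_congr e
  rw [Module.card_eq_pow_finrank (K := F) (V := ↥(sDual ⇑σ C)),
    Module.card_eq_pow_finrank (K := F) (V := ↥(sDual (fun t : F => t) C))] at hcard
  have := Nat.pow_right_injective Fintype.one_lt_card hcard
  rw [this]
  exact s14_finrank_sDual_id_add C

lemma s14_sDual_sDual [Fintype F] (σ : F ≃+* F) (hσ : ∀ t, σ (σ t) = t)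
    (C : Submodule F (ι → F)) : sDual ⇑σ (sDual ⇑σ C) = C := by
  have h1 := s14_finrank_sDual_add σ hσ C
  have h2 := s14_finrank_sDual_add σ hσ (sDual ⇑σ C)
  exact (Submodule.eq_of_le_of_finrank_le (s14_le_sDual_sDual σ hσ C) (by omega)).symm

lemma s14_hull_eq [Fintype F] (σ : F ≃+* F) (hσ : ∀ t, σ (σ t) = t)
    {C : Submodule F (ι → F)} (h : C ≤ sDual ⇑σ C) :
    sHull ⇑σ (sDual ⇑σ C) = C := by
  unfold sHull
  rw [s14_sDual_sDual σ hσ C]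
  exact inf_eq_right.mpr h

end Aux

section Aux2

variable {ι : Type*} [Fintype ι]

lemma s14_exists_conj [Fintype F] [DecidableEq F] {q : ℕ} (hq : q = Fintype.card F)
    (hq234 : q = 2 ∨ q = 3 ∨ q = 4) :
    ∃ σ : F ≃+* F, (∀ x, σ x = x ^ (q / 2)) ∧ (∀ x, σ (σ x) = x) ∧
      (∀ a : Fˣ, (a : F) * σ (a : F) = 1) ∧ ((∑ a : F, a) = 0 ∨ q = 2) := by
  have hcast : ((Fintype.card F : ℕ) : F) = 0 := FiniteField.cast_card_eq_zero F
  have hpow : ∀ x : F, x ^ Fintype.card F = x := fun x => FiniteField.pow_card x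
  have hcardu : Fintype.card Fˣ = Fintype.card F - 1 := by
    exact Fintype.card_units F
  rcases hq234 with h2 | h3 | h4
  · -- q = 2
    refine ⟨RingEquiv.refl F, ?_, fun x => rfl, ?_, Or.inr h2⟩
    · intro x; rw [h2]; norm_num
    · intro a
      have hcu : Fintype.card Fˣ = 1 := by rw [hcardu, ← hq, h2]
      have : a = 1 := by
        have hp : a ^ Fintype.card Fˣ = 1 := pow_card_eq_one
        rwa [hcu, pow_one] at hp
      rw [this]; simp
  · -- q = 3
    have hsum : (∑ a : F, a) = 0 := by
      have := FiniteField.sum_pow_lt_card_sub_one (K := F) 1 (by rw [← hq, h3]; norm_num)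
      simpa using this
    refine ⟨RingEquiv.refl F, ?_, fun x => rfl, ?_, Or.inl hsum⟩
    · intro x; rw [h3]; norm_num
    · intro a
      have hcu : Fintype.card Fˣ = 2 := by rw [hcardu, ← hq, h3]
      have h1 : a * a = 1 := by
        have hp : a ^ Fintype.card Fˣ = 1 := pow_card_eq_one
        rwa [hcu, pow_two] at hp
      have : ((a * a : Fˣ) : F) = ((1 : Fˣ) : F) := by rw [h1]
      simpa using this
  · -- q = 4
    have hc4 : Fintype.card F = 4 := by omega
    have h20 : (2 : F) = 0 := by
      have h40 : (4 : F) = 0 := by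
        have := hcast; rw [hc4] at this; exact_mod_cast this
      have : (2 : F) * 2 = 0 := by rw [show (2:F)*2 = 4 by norm_num, h40]
      rcases mul_eq_zero.mp this with h | h <;> exact h
    have hx4 : ∀ x : F, (x ^ 2) ^ 2 = x := by
      intro x
      rw [← pow_mul]
      have := hpow x; rwa [hc4] at this
    have hadd : ∀ a b : F, (a + b) ^ 2 = a ^ 2 + b ^ 2 := by
      intro a b
      rw [add_sq, h20]; ring
    refine ⟨{ toFun := fun x => x ^ 2, invFun := fun x => x ^ 2,
              left_inv := hx4, right_inv := hx4,
              map_mul' := fun a b => mul_pow a b 2,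
              map_add' := hadd }, ?_, ?_, ?_, ?_⟩
    · intro x; rw [h4]; rfl
    · intro x; exact hx4 x
    · intro a
      have hcu : Fintype.card Fˣ = 3 := by rw [hcardu, hc4]
      have h1 : a * a * a = 1 := by
        have hp : a ^ Fintype.card Fˣ = 1 := pow_card_eq_one
        rwa [hcu, pow_succ, pow_two] at hp
      have h2 : ((a * a * a : Fˣ) : F) = ((1 : Fˣ) : F) := by rw [h1]
      simp only [Units.val_mul, Units.val_one] at h2
      show (a : F) * (a : F) ^ 2 = 1
      rw [pow_two, ← mul_assoc]
      rw [show (a:F) * a * a = a * a * a from rfl]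
      exact h2
    · left
      have := FiniteField.sum_pow_lt_card_sub_one (K := F) 1 (by rw [hc4]; norm_num)
      simpa using this

lemma s14_splitAt_symm_same {τ : Type*} [DecidableEq τ] (t : τ)
    (p : F × ({j : τ // j ≠ t} → F)) :
    (Equiv.funSplitAt t F).symm p t = p.1 := by
  simp [Equiv.funSplitAt, Equiv.piSplitAt]

lemma s14_splitAt_symm_other {τ : Type*} [DecidableEq τ] {t u : τ} (h : u ≠ t)
    (p : F × ({j : τ // j ≠ t} → F)) :
    (Equiv.funSplitAt t F).symm p u = p.2 ⟨u, h⟩ := by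
  simp [Equiv.funSplitAt, Equiv.piSplitAt, h]

lemma s14_sum_eval {τ : Type*} [Fintype τ] [DecidableEq τ] [Fintype F] (t : τ) (g : F → F) :
    ∑ v : τ → F, g (v t) = Fintype.card ({j : τ // j ≠ t} → F) • ∑ a : F, g a := by
  rw [← Equiv.sum_comp (Equiv.funSplitAt t F).symm (fun v => g (v t)), Fintype.sum_prod_type]
  simp only [s14_splitAt_symm_same]
  simp only [Finset.sum_const, Finset.card_univ]
  rw [← Finset.smul_sum]

lemma s14_sum_eval2 {τ : Type*} [Fintype τ] [DecidableEq τ] [Fintype F] {t u : τ} (h : u ≠ t)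
    (g h' : F → F) :
    ∑ v : τ → F, g (v t) * h' (v u) =
      (∑ a : F, g a) * ∑ w : {j : τ // j ≠ t} → F, h' (w ⟨u, h⟩) := by
  rw [← Equiv.sum_comp (Equiv.funSplitAt t F).symm (fun v => g (v t) * h' (v u)),
    Fintype.sum_prod_type, Finset.sum_mul_sum]
  exact Finset.sum_congr rfl fun a _ => Finset.sum_congr rfl fun w _ => by
    rw [s14_splitAt_symm_same, s14_splitAt_symm_other h]

end Aux2

section Aux3

variable {ι : Type*} [Fintype ι]

lemma s14_card_fun_cast {τ : Type*} [Fintype τ] [DecidableEq τ] [Nonempty τ] [Fintype F] :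
    ((Fintype.card (τ → F) : ℕ) : F) = 0 := by
  rw [Fintype.card_fun, Nat.cast_pow, FiniteField.cast_card_eq_zero]
  exact zero_pow Fintype.card_ne_zero

lemma s14_full_sum [Fintype F] {r : ℕ} (σ : F ≃+* F) (hr2 : 2 ≤ r)
    (hsum : (∑ a : F, a) = 0 ∨ 3 ≤ r) (x y : Fin r) :
    ∑ u : Fin r → F, u x * σ (u y) = 0 := by
  classical
  rcases eq_or_ne x y with rfl | hxy
  · haveI hne : Nonempty {j : Fin r // j ≠ x} := by
      obtain ⟨j, hj⟩ := Fintype.exists_ne_of_one_lt_card (by simpa using (by omega : 1 < r)) x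
      exact ⟨⟨j, hj⟩⟩
    rw [s14_sum_eval x (fun a => a * σ a), nsmul_eq_mul, s14_card_fun_cast, zero_mul]
  · rw [s14_sum_eval2 (Ne.symm hxy) (fun a => a) (fun a => σ a)]
    rcases hsum with h0 | hr3
    · rw [h0, zero_mul]
    · have hxy3 : ∃ j : Fin r, j ≠ x ∧ j ≠ y := by
        by_contra hco
        push_neg at hco
        have hsub : (Finset.univ : Finset (Fin r)) ⊆ {x, y} := by
          intro j _
          rcases eq_or_ne j x with rfl | hjx
          · simp
          · simp [hco j hjx]
        have h1 := Finset.card_le_card hsub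
        have h2 : ({x, y} : Finset (Fin r)).card ≤ 2 := by
          refine (Finset.card_insert_le x {y}).trans ?_
          simp
        rw [Finset.card_univ, Fintype.card_fin] at h1
        omega
      obtain ⟨j, hjx, hjy⟩ := hxy3
      haveI hne2 : Nonempty {j' : {j0 : Fin r // j0 ≠ x} // j' ≠ ⟨y, Ne.symm hxy⟩} :=
        ⟨⟨⟨j, hjx⟩, by simp [Subtype.ext_iff, hjy]⟩⟩
      rw [show ∑ w : {j0 : Fin r // j0 ≠ x} → F, σ (w ⟨y, Ne.symm hxy⟩)
            = σ (∑ w : {j0 : Fin r // j0 ≠ x} → F, w ⟨y, Ne.symm hxy⟩) from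
          (map_sum σ _ _).symm]
      rw [s14_sum_eval (⟨y, Ne.symm hxy⟩ : {j0 : Fin r // j0 ≠ x}) (fun a => a),
        nsmul_eq_mul, s14_card_fun_cast, zero_mul, map_zero, mul_zero]

lemma s14_rows_orth [Fintype F] {r : ℕ} (σ : F ≃+* F) (hr2 : 2 ≤ r) (c : ι → (Fin r → F))
    (hc0 : ∀ i, c i ≠ 0)
    (hproj : ∀ v : Fin r → F, v ≠ 0 → ∃! i : ι, ∃ a : Fˣ, (a : F) • c i = v)
    (hunit : ∀ a : Fˣ, (a : F) * σ (a : F) = 1)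
    (hsum : (∑ a : F, a) = 0 ∨ 3 ≤ r) (x y : Fin r) :
    ∑ i, c i x * σ (c i y) = 0 := by
  classical
  set g : ι × Fˣ → (Fin r → F) := fun p => (p.2 : F) • c p.1 with hg
  have hginj : ∀ p ∈ (Finset.univ : Finset (ι × Fˣ)), ∀ p' ∈ Finset.univ,
      g p = g p' → p = p' := by
    rintro ⟨i, a⟩ - ⟨i', a'⟩ - hpp
    have hv : (a : F) • c i ≠ 0 := smul_ne_zero (Units.ne_zero a) (hc0 i)
    have h1 : (a : F) • c i = (a' : F) • c i' := hpp
    obtain ⟨i0, -, hu⟩ := hproj _ hv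
    have hii : i = i' := by rw [hu i ⟨a, rfl⟩, hu i' ⟨a', h1.symm⟩]
    subst hii
    have haa : (a : F) = (a' : F) := by
      have hz : ((a : F) - (a' : F)) • c i = 0 := by rw [sub_smul, h1, sub_self]
      rcases smul_eq_zero.mp hz with h | h
      · exact sub_eq_zero.mp h
      · exact absurd h (hc0 i)
    exact Prod.ext rfl (Units.ext haa)
  have himage : ∑ u ∈ Finset.univ.image g, u x * σ (u y)
      = ∑ u : Fin r → F, u x * σ (u y) := by
    apply Finset.sum_subset (Finset.subset_univ _)
    rintro u - hu
    have hu0 : u = 0 := by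
      by_contra h0
      obtain ⟨i, ⟨a, ha⟩, -⟩ := hproj u h0
      exact hu (Finset.mem_image.mpr ⟨(i, a), Finset.mem_univ _, ha⟩)
    rw [hu0]
    simp
  have hpairs : ∑ p : ι × Fˣ, (g p) x * σ ((g p) y)
      = (Fintype.card Fˣ) • ∑ i, c i x * σ (c i y) := by
    rw [Fintype.sum_prod_type]
    have hrow : ∀ i : ι, ∑ a : Fˣ, (g (i, a)) x * σ ((g (i, a)) y)
        = (Fintype.card Fˣ) • (c i x * σ (c i y)) := by
      intro i
      have hterm : ∀ a : Fˣ, (g (i, a)) x * σ ((g (i, a)) y) = c i x * σ (c i y) := by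
        intro a
        simp only [hg, Pi.smul_apply, smul_eq_mul, _root_.map_mul]
        rw [show (a : F) * c i x * (σ (a : F) * σ (c i y))
              = ((a : F) * σ (a : F)) * (c i x * σ (c i y)) by ring, hunit, one_mul]
      rw [Finset.sum_congr rfl fun a _ => hterm a, Finset.sum_const, Finset.card_univ]
    rw [Finset.sum_congr rfl fun i _ => hrow i, ← Finset.smul_sum]
  have hEq : (Fintype.card Fˣ) • ∑ i, c i x * σ (c i y) = 0 := by
    rw [← hpairs]
    rw [Finset.sum_image hginj] at himage
    rw [himage]
    exact s14_full_sum σ hr2 hsum x y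
  have hcoef : ((Fintype.card Fˣ : ℕ) : F) ≠ 0 := by
    rw [Fintype.card_units F]
    have h1F : 1 ≤ Fintype.card F := Fintype.card_pos
    rw [Nat.cast_sub h1F, FiniteField.cast_card_eq_zero, Nat.cast_one, zero_sub]
    exact neg_ne_zero.mpr one_ne_zero
  rw [nsmul_eq_mul] at hEq
  rcases mul_eq_zero.mp hEq with h | h
  · exact absurd h hcoef
  · exact h

lemma s14_rank_rows {r : ℕ} (c : ι → (Fin r → F)) (hc0 : ∀ i, c i ≠ 0)
    (hproj : ∀ v : Fin r → F, v ≠ 0 → ∃! i : ι, ∃ a : Fˣ, (a : F) • c i = v) :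
    Module.finrank F ↥(rowSpace (Matrix.of fun x i => c i x)) = r := by
  classical
  have hinj : Function.Injective (Matrix.of fun x i => c i x).vecMulLinear := by
    rw [← LinearMap.ker_eq_bot, LinearMap.ker_eq_bot']
    intro v hv
    by_contra hv0
    obtain ⟨x0, hx0⟩ := Function.ne_iff.mp hv0
    simp only [Pi.zero_apply] at hx0
    set u : Fin r → F := Pi.single x0 1 with hu
    have hu0 : u ≠ 0 := fun h => by simpa [hu] using congrFun h x0
    obtain ⟨i, ⟨a, ha⟩, -⟩ := hproj u hu0
    have hci : c i = (a : F)⁻¹ • u := by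
      rw [← ha, smul_smul, inv_mul_cancel₀ (Units.ne_zero a), one_smul]
    have hvi : ∑ x', v x' * c i x' = 0 := by
      have h1 := congrFun hv i
      simpa [Matrix.vecMulLinear_apply, Matrix.vecMul, dotProduct] using h1
    rw [hci] at hvi
    simp only [Pi.smul_apply, smul_eq_mul, hu, Pi.single_apply, mul_ite, mul_one, mul_zero,
      Finset.sum_ite_eq', Finset.mem_univ, if_true] at hvi
    rcases mul_eq_zero.mp hvi with h | h
    · exact hx0 h
    · exact absurd h (inv_ne_zero (Units.ne_zero a))
  rw [rowSpace, show Set.range (Matrix.of fun x i => c i x) = Set.range (Matrix.of fun x i => c i x).row from rfl, ← range_vecMulLinear,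
    LinearMap.finrank_range_of_inj hinj, Module.finrank_fintype_fun_eq_card, Fintype.card_fin]

end Aux3

set_option synthInstance.maxHeartbeats 1000000 in
lemma s14_dummy : True := trivial

def IsLCDEmbedding2 {ι : Type*} [Fintype ι] {N : ℕ} (s : F → F)
    (C : Submodule F (ι → F)) (Ct : Submodule F (Fin N → F)) : Prop :=
  sHull s Ct = ⊥ ∧ ∃ f : ι → Fin N, Function.Injective f ∧
    Submodule.map (LinearMap.funLeft F F f) Ct = C

section Aux4

variable {ι : Type*} [Fintype ι]

lemma s14_lower (σ : F ≃+* F) {N : ℕ} {C : Submodule F (ι → F)}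
    {Ct : Submodule F (Fin N → F)} (h0 : sHull ⇑σ Ct = ⊥) (f : ι → Fin N)
    (hf : Function.Injective f)
    (hmap : Submodule.map (LinearMap.funLeft F F f) Ct = C) :
    Fintype.card ι + Module.finrank F ↥(sHull ⇑σ C) ≤ N := by
  classical
  set W : Submodule F (Fin N → F) :=
    Ct ⊓ Submodule.comap (LinearMap.funLeft F F f) (sHull ⇑σ C) with hW
  have hWmap : Submodule.map (LinearMap.funLeft F F f) W = sHull ⇑σ C := by
    apply le_antisymm
    · rintro _ ⟨w, hw, rfl⟩
      exact hw.2
    · intro z hz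
      have hzC : z ∈ C := hz.1
      rw [← hmap] at hzC
      obtain ⟨w, hw, rfl⟩ := hzC
      exact ⟨w, ⟨hw, hz⟩, rfl⟩
  set T := {j : Fin N // j ∉ Set.range f} with hTdef
  let ρ : (Fin N → F) →ₗ[F] (T → F) := LinearMap.funLeft F F Subtype.val
  have hker : LinearMap.ker (ρ.domRestrict W) = ⊥ := by
    rw [LinearMap.ker_eq_bot']
    rintro ⟨w, hwW⟩ hw0
    have hzero : ∀ j : Fin N, j ∉ Set.range f → w j = 0 := by
      intro j hj
      have h1 : ρ w = 0 := hw0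
      have h2 := congrFun h1 ⟨j, hj⟩
      simpa [ρ, LinearMap.funLeft_apply] using h2
    have hwhull : w ∈ sHull ⇑σ Ct := by
      refine ⟨hwW.1, ?_⟩
      intro d hd
      have hsplit : ∑ j, w j * σ (d j) = ∑ i, w (f i) * σ (d (f i)) := by
        have h1 : ∑ j ∈ Finset.univ.image f, w j * σ (d j)
            = ∑ i : ι, w (f i) * σ (d (f i)) :=
          Finset.sum_image (fun i _ i' _ hii => hf hii)
        rw [← h1]
        apply (Finset.sum_subset (Finset.subset_univ _) ?_).symm
        rintro j - hj
        have hjr : j ∉ Set.range f := by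
          rintro ⟨i, hi⟩
          exact hj (Finset.mem_image.mpr ⟨i, Finset.mem_univ _, hi⟩)
        rw [hzero j hjr, zero_mul]
      rw [hsplit]
      have h1 : (LinearMap.funLeft F F f w) ∈ sHull ⇑σ C := hwW.2
      have h2 : (LinearMap.funLeft F F f d) ∈ C := by
        rw [← hmap]; exact Submodule.mem_map_of_mem hd
      have := h1.2 _ h2
      simpa [LinearMap.funLeft_apply] using this
    rw [h0] at hwhull
    exact Subtype.ext hwhull
  have hrank1 : Module.finrank F ↥W ≤ Fintype.card T := by
    have hrn := LinearMap.finrank_range_add_finrank_ker (ρ.domRestrict W)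
    rw [hker, finrank_bot, add_zero] at hrn
    rw [← hrn]
    exact (Submodule.finrank_le _).trans (le_of_eq (by
      rw [Module.finrank_fintype_fun_eq_card]))
  have hrank2 : Module.finrank F ↥(sHull ⇑σ C) ≤ Module.finrank F ↥W := by
    rw [← hWmap]
    exact Submodule.finrank_map_le _ _
  have hcardT : Fintype.card T = N - Fintype.card ι := by
    have h1 : Fintype.card T = Fintype.card (Fin N)
        - Fintype.card {j : Fin N // j ∈ Set.range f} :=
      Fintype.card_subtype_compl _
    have h2 : Fintype.card {j : Fin N // j ∈ Set.range f} = Fintype.card ι :=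
      (Fintype.card_congr (Equiv.ofInjective f hf)).symm
    rw [h1, h2, Fintype.card_fin]
  have hcardle : Fintype.card ι ≤ N := by
    have := Fintype.card_le_of_injective f hf
    rwa [Fintype.card_fin] at this
  omega

lemma s14_upper (σ : F ≃+* F) (hσ : ∀ t, σ (σ t) = t) {H : Submodule F (ι → F)}
    {n h : ℕ} (e : ι ≃ Fin n) (hh : Module.finrank F ↥(sHull ⇑σ H) = h) :
    ∃ Ct : Submodule F (Fin (n + h) → F), IsLCDEmbedding2 ⇑σ H Ct := by
  classical
  set K : Submodule F (ι → F) := sHull ⇑σ H with hKdef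
  have hKH : K ≤ H := inf_le_left
  set K' : Submodule F ↥H := K.comap H.subtype with hK'def
  have hK'rank : Module.finrank F ↥K' = h := by
    rw [← hh]
    exact LinearEquiv.finrank_eq (Submodule.comapSubtypeEquivOfLe hKH)
  obtain ⟨U', hcompl⟩ := Submodule.exists_isCompl K'
  haveI : Module.Free F ↥K' := Module.Free.of_divisionRing F ↥K'
  let pr : ↥H →ₗ[F] ↥K' := K'.linearProjOfIsCompl U' hcompl
  let b : Module.Basis (Fin h) F ↥K' := Module.finBasisOfFinrankEq F ↥K' hK'rank
  let P : ↥H →ₗ[F] (Fin h → F) := (b.equivFun : ↥K' ≃ₗ[F] (Fin h → F)).toLinearMap ∘ₗ pr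
  let A : ((Fin n → F) × (Fin h → F)) →ₗ[F] (Fin (n + h) → F) :=
    { toFun := fun p => Fin.append p.1 p.2
      map_add' := by
        intro p p'
        funext j
        induction j using Fin.addCases with
        | left j => simp [Fin.append_left]
        | right j => simp [Fin.append_right]
      map_smul' := by
        intro a p
        funext j
        induction j using Fin.addCases with
        | left j => simp [Fin.append_left]
        | right j => simp [Fin.append_right] }
  let R : (ι → F) →ₗ[F] (Fin n → F) := LinearMap.funLeft F F e.symm
  let Φ : ↥H →ₗ[F] (Fin (n + h) → F) := A ∘ₗ ((R ∘ₗ H.subtype).prod P)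
  have hΦapp : ∀ (x : ↥H), Φ x = Fin.append (fun j => (x : ι → F) (e.symm j)) (P x) := by
    intro x; rfl
  have hf : Function.Injective (Fin.castAdd h ∘ e) := by
    intro i i' hii
    apply e.injective
    have : ((Fin.castAdd h (e i)) : ℕ) = ((Fin.castAdd h (e i')) : ℕ) := by
      rw [show Fin.castAdd h (e i) = Fin.castAdd h (e i') from hii]
    exact Fin.ext this
  have hcomp : (LinearMap.funLeft F F (Fin.castAdd h ∘ e)).comp Φ = H.subtype := by
    apply LinearMap.ext
    intro x
    funext i
    rw [LinearMap.comp_apply, LinearMap.funLeft_apply, hΦapp]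
    simp [Fin.append_left]
  have hmapH : Submodule.map (LinearMap.funLeft F F (Fin.castAdd h ∘ e))
      (LinearMap.range Φ) = H := by
    rw [← LinearMap.range_comp, hcomp, Submodule.range_subtype]
  -- inner product formula
  have hform : ∀ (x y : ↥H), ∑ j, (Φ x) j * σ ((Φ y) j) =
      (∑ i, (x : ι → F) i * σ ((y : ι → F) i)) + ∑ k, (P x) k * σ ((P y) k) := by
    intro x y
    rw [hΦapp, hΦapp, Fin.sum_univ_add]
    congr 1
    · simp only [Fin.append_left]
      exact Equiv.sum_comp e.symm (fun i => (x : ι → F) i * σ ((y : ι → F) i))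
    · simp only [Fin.append_right]
  refine ⟨LinearMap.range Φ, ?_, ⟨Fin.castAdd h ∘ e, hf, hmapH⟩⟩
  -- hull is trivial
  rw [Submodule.eq_bot_iff]
  rintro z ⟨hzC, hzD⟩
  obtain ⟨x, rfl⟩ := hzC
  have hPx : P x = 0 := by
    funext k
    set u : ↥K' := b.equivFun.symm (Pi.single k 1) with hudef
    set y : ↥H := (u : ↥H) with hydef
    have hyP : P y = Pi.single k 1 := by
      show b.equivFun (pr (u : ↥H)) = Pi.single k 1
      rw [show pr (u : ↥H) = u from Submodule.linearProjOfIsCompl_apply_left hcompl u]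
      rw [hudef, LinearEquiv.apply_symm_apply]
    have hyD : (y : ι → F) ∈ sDual ⇑σ H := (u.2 : (u : ↥H).val ∈ K).2
    have hy0 : ∑ i, (x : ι → F) i * σ ((y : ι → F) i) = 0 := by
      rw [s14_conj_sum σ hσ]
      rw [hyD _ x.2, map_zero]
    have hz := hzD (Φ y) (LinearMap.mem_range.mpr ⟨y, rfl⟩)
    rw [hform x y, hy0, zero_add, hyP] at hz
    simpa [Pi.single_apply, apply_ite σ, _root_.map_zero, _root_.map_one, mul_ite, mul_one, mul_zero,
      Finset.sum_ite_eq', Finset.mem_univ, if_true] using hz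
  have hprx : pr x = 0 := by
    apply b.equivFun.injective
    rw [map_zero]
    exact hPx
  have hxU' : x ∈ U' := by
    rw [← Submodule.linearProjOfIsCompl_ker hcompl]
    exact LinearMap.mem_ker.mpr hprx
  have hxdual : (x : ι → F) ∈ sDual ⇑σ H := by
    intro cv hcv
    have hz := hzD (Φ ⟨cv, hcv⟩) (LinearMap.mem_range.mpr ⟨⟨cv, hcv⟩, rfl⟩)
    rw [hform x ⟨cv, hcv⟩, hPx] at hz
    simpa using hz
  have hxK' : x ∈ K' := by
    show (x : ι → F) ∈ K
    exact ⟨x.2, hxdual⟩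
  have hx0 : x = 0 := by
    have := hcompl.disjoint
    exact (Submodule.disjoint_def.mp this) x hxK' hxU'
  rw [hx0, map_zero]

end Aux4

/-- the `q`-ary Hamming code (the dual of the simplex code, with Hermitian duality
when `q = 4`, encoded by the conjugation `x ↦ x ^ (q / 2)`) has hull of dimension `r`, and its
minimal LCD embedding length is `(q^r - 1)/(q - 1) + r`. -/
theorem stmt14 {F : Type*} [Field F] [Fintype F] {q r : ℕ}
    (hq : q = Fintype.card F) (hq234 : q = 2 ∨ q = 3 ∨ q = 4)
    (hr2 : q = 2 → 3 ≤ r) (hr34 : q ≠ 2 → 2 ≤ r)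
    {ι : Type*} [Fintype ι] (c : ι → (Fin r → F))
    (hcard : Fintype.card ι = (q ^ r - 1) / (q - 1))
    (hc0 : ∀ i, c i ≠ 0)
    (hproj : ∀ v : Fin r → F, v ≠ 0 → ∃! i : ι, ∃ a : Fˣ, (a : F) • c i = v) :
    Module.finrank F ↥(sHull (fun x : F => x ^ (q / 2))
        (sDual (fun x : F => x ^ (q / 2)) (rowSpace (Matrix.of fun x i => c i x)))) = r ∧
      IsLeast {N : ℕ | ∃ Ct : Submodule F (Fin N → F),
          IsLCDEmbedding (fun x : F => x ^ (q / 2))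
            (sDual (fun x : F => x ^ (q / 2)) (rowSpace (Matrix.of fun x i => c i x))) Ct}
        ((q ^ r - 1) / (q - 1) + r) := by
  classical
  obtain ⟨σ, hσn, hσinv, hunit, hsum0⟩ := s14_exists_conj hq hq234
  have hs : (fun x : F => x ^ (q / 2)) = ⇑σ := funext fun x => (hσn x).symm
  rw [hs]
  set C₀ : Submodule F (ι → F) := rowSpace (Matrix.of fun x i => c i x) with hC0
  have hr2' : 2 ≤ r := by
    rcases hq234 with h | h | h
    · exact le_trans (by norm_num) (hr2 h)
    · exact hr34 (by omega)
    · exact hr34 (by omega)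
  have hsum : (∑ a : F, a) = 0 ∨ 3 ≤ r := by
    rcases hsum0 with h | h
    · exact Or.inl h
    · exact Or.inr (hr2 h)
  have horth : ∀ x y : Fin r, ∑ i, c i x * σ (c i y) = 0 :=
    s14_rows_orth σ hr2' c hc0 hproj hunit hsum
  have hCle : C₀ ≤ sDual ⇑σ C₀ := by
    rw [hC0]
    unfold rowSpace
    rw [Submodule.span_le]
    rintro g ⟨x, rfl⟩
    apply s14_mem_sDual_span σ
    rintro g' ⟨y, rfl⟩
    exact horth x y
  have hHull : sHull ⇑σ (sDual ⇑σ C₀) = C₀ := s14_hull_eq σ hσinv hCle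
  have hrk : Module.finrank F ↥C₀ = r := s14_rank_rows c hc0 hproj
  have hfr : Module.finrank F ↥(sHull ⇑σ (sDual ⇑σ C₀)) = r := by rw [hHull]; exact hrk
  refine ⟨hfr, ?_, ?_⟩
  · obtain ⟨Ct, hCt⟩ := s14_upper σ hσinv (Fintype.equivFinOfCardEq hcard) hfr
    exact ⟨Ct, hCt.1, hCt.2⟩
  · rintro N ⟨Ct, hCt⟩
    have hCt' : sHull ⇑σ Ct = ⊥ ∧ ∃ f : ι → Fin N, Function.Injective f ∧
        Submodule.map (LinearMap.funLeft F F f) Ct = sDual ⇑σ C₀ := hCt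
    obtain ⟨h1, f, hf, hmap⟩ := hCt'
    have hlow := s14_lower σ h1 f hf hmap
    rw [hcard, hfr] at hlow
    exact hlow
end

section
/- Let G be a k×n generator matrix of a linear code C over F_q with hull dimension ℓ, partitioned as G = [H; A] with H generating Hull(C). Then rank(A·Aᵀ) = k − ℓ; in particular A·Aᵀ is invertible. -/
open Matrix

variable {F : Type*} [Field F]

/-- with generator matrix `[H; A]`, `H` generating the hull, the matrix `A * Aᵀ`
has full rank `k - ℓ`, in particular it is invertible. -/
theorem stmt17 {F : Type*} [Field F] [Fintype F] {n k ℓ : ℕ}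
    {C : Submodule F (Fin n → F)}
    (H : Matrix (Fin ℓ) (Fin n) F) (A : Matrix (Fin (k - ℓ)) (Fin n) F)
    (hH : rowSpace H = sHull (id : F → F) C)
    (hC : rowSpace (fromRows H A) = C)
    (hind : LinearIndependent F (fromRows H A))
    (hk : k = Module.finrank F C)
    (hl : ℓ = Module.finrank F ↥(sHull (id : F → F) C)) :
    (A * Aᵀ).rank = k - ℓ ∧ IsUnit (A * Aᵀ) := by
  classical
  have key : ∀ x : Fin (k - ℓ) → F, (A * Aᵀ).vecMul x = 0 → x = 0 := by
    intro x hx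
    set v : Fin n → F := A.vecMul x with hv
    have hvsum : v = ∑ i, x i • A i := by
      funext j
      rw [hv]
      simp [Matrix.vecMul, dotProduct, Finset.sum_apply]
    have hvC : v ∈ C := by
      rw [← hC, hvsum]
      exact Submodule.sum_mem _ fun i _ => Submodule.smul_mem _ _
        (Submodule.subset_span ⟨Sum.inr i, rfl⟩)
    rw [← Matrix.vecMul_vecMul] at hx
    have hAv : ∀ j, ∑ i, v i * A j i = 0 := by
      intro j
      have h0 := congr_fun hx j
      simpa [hv, Matrix.vecMul, dotProduct, Matrix.transpose_apply] using h0
    -- the linear functional c ↦ v ⬝ᵥ c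
    let φ : (Fin n → F) →ₗ[F] F :=
      { toFun := fun c => dotProduct v c
        map_add' := fun a b => dotProduct_add v a b
        map_smul' := fun r a => dotProduct_smul r v a }
    have hφ : C ≤ LinearMap.ker φ := by
      rw [← hC, rowSpace, Submodule.span_le]
      rintro _ ⟨i, rfl⟩
      cases i with
      | inl i =>
        have hHi : H i ∈ sDual (id : F → F) C := by
          have hmem : H i ∈ rowSpace H := Submodule.subset_span ⟨i, rfl⟩
          rw [hH] at hmem
          exact hmem.2
        have h1 := hHi v hvC
        simp only [LinearMap.mem_ker, φ, LinearMap.coe_mk, AddHom.coe_mk,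
          SetLike.mem_coe]
        simp only [id_eq] at h1
        rw [dotProduct]
        rw [Finset.sum_congr rfl fun i _ => mul_comm (v i) _]
        exact h1
      | inr i =>
        simp only [SetLike.mem_coe, LinearMap.mem_ker, φ, LinearMap.coe_mk,
          AddHom.coe_mk, Matrix.fromRows_apply_inr, dotProduct]
        exact hAv i
    have hvD : v ∈ sDual (id : F → F) C := by
      intro c hc
      have := hφ hc
      simpa [φ, dotProduct] using this
    have hvHull : v ∈ rowSpace H := by
      rw [hH]; exact ⟨hvC, hvD⟩
    obtain ⟨y, hy⟩ := (Submodule.mem_span_range_iff_exists_fun F).mp hvHull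
    have hcomb : ∑ i : Fin ℓ ⊕ Fin (k - ℓ),
        (Sum.elim y (fun j => -x j)) i • (fromRows H A) i = 0 := by
      rw [Fintype.sum_sum_type]
      have e1 : ∀ i : Fin ℓ, (fromRows H A) (Sum.inl i) = H i := fun _ => rfl
      have e2 : ∀ i : Fin (k - ℓ), (fromRows H A) (Sum.inr i) = A i := fun _ => rfl
      simp only [Sum.elim_inl, Sum.elim_inr, e1, e2, neg_smul,
        Finset.sum_neg_distrib]
      rw [hy, ← hvsum]
      simp
    have hz := (Fintype.linearIndependent_iff.mp hind) _ hcomb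
    funext j
    have h0 := hz (Sum.inr j)
    simpa using h0
  have hinj : Function.Injective (A * Aᵀ).vecMul := by
    intro a b hab
    have hab' : a ᵥ* (A * Aᵀ) = b ᵥ* (A * Aᵀ) := hab
    have h1 : (A * Aᵀ).vecMul (a - b) = 0 := by
      show (a - b) ᵥ* (A * Aᵀ) = 0
      rw [Matrix.sub_vecMul, hab', sub_self]
    exact sub_eq_zero.mp (key _ h1)
  have hU : IsUnit (A * Aᵀ) := Matrix.vecMul_injective_iff_isUnit.mp hinj
  refine ⟨?_, hU⟩
  rw [Matrix.rank_of_isUnit _ hU, Fintype.card_fin]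
end

section
/- Let C be a self-orthogonal [n,ℓ] code over F_q with generator matrix H. Then [H | I_ℓ] generates an LCD code of length n+ℓ, and no LCD embedding of C has length less than n+ℓ. -/
open Matrix

variable {F : Type*} [Field F]

/-- for a self-orthogonal `[n, ℓ]` code `C` with generator matrix `H`,
`[H | I_ℓ]` generates an LCD code, and no LCD embedding of `C` has length below `n + ℓ`. -/
theorem stmt19 {F : Type*} [Field F] [Fintype F] {n ℓ : ℕ}
    {C : Submodule F (Fin n → F)}
    (H : Matrix (Fin ℓ) (Fin n) F) (hHC : rowSpace H = C)
    (hind : LinearIndependent F H)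
    (hso : C ≤ sDual (id : F → F) C) :
    sHull (id : F → F)
        (rowSpace (fromCols H (1 : Matrix (Fin ℓ) (Fin ℓ) F))) = ⊥ ∧
      ∀ (N : ℕ) (Ct : Submodule F (Fin N → F)),
        IsLCDEmbedding (id : F → F) C Ct → n + ℓ ≤ N := by
  have hrow : ∀ j, H j ∈ C := fun j => hHC ▸ Submodule.subset_span (Set.mem_range_self j)
  have horth : ∀ j k, ∑ i, H j i * H k i = 0 := fun j k => hso (hrow j) (H k) (hrow k)
  constructor
  · -- Part 1: [H | I] generates an LCD code
    set G := fromCols H (1 : Matrix (Fin ℓ) (Fin ℓ) F) with hGdef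
    have hGG : ∀ j k, ∑ i, G j i * G k i = if j = k then 1 else 0 := by
      intro j k
      rw [Fintype.sum_sum_type]
      have h1 : ∀ i : Fin n, G j (Sum.inl i) * G k (Sum.inl i) = H j i * H k i := by
        intro i; simp [hGdef, fromCols]
      have h2 : ∀ i : Fin ℓ, G j (Sum.inr i) * G k (Sum.inr i) =
          (if j = i then (1:F) else 0) * (if k = i then (1:F) else 0) := by
        intro i; simp [hGdef, fromCols, Matrix.one_apply]
      rw [Finset.sum_congr rfl (fun i _ => h1 i), Finset.sum_congr rfl (fun i _ => h2 i),
        horth j k]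
      simp [Finset.sum_ite_eq, ite_and, eq_comm]
    rw [Submodule.eq_bot_iff]
    rintro v ⟨hv1, hv2⟩
    rw [rowSpace, SetLike.mem_coe] at hv1
    replace hv1 := (Submodule.mem_span_range_iff_exists_fun F).mp hv1
    obtain ⟨x, hx⟩ := hv1
    have hx0 : ∀ k, x k = 0 := by
      intro k
      have h2 := hv2 (G k) (Submodule.subset_span (Set.mem_range_self k))
      simp only [id] at h2
      have hv : ∀ i, v i = ∑ j, x j * G j i := by
        intro i
        rw [← hx]; simp [Finset.sum_apply]
      calc x k = ∑ j, x j * (if j = k then 1 else 0) := by simp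
        _ = ∑ j, x j * ∑ i, G j i * G k i := by
            refine Finset.sum_congr rfl fun j _ => ?_; rw [hGG]
        _ = ∑ j, ∑ i, x j * (G j i * G k i) := by
            exact Finset.sum_congr rfl fun j _ => Finset.mul_sum _ _ _
        _ = ∑ i, ∑ j, x j * (G j i * G k i) := Finset.sum_comm
        _ = ∑ i, v i * G k i := by
            refine Finset.sum_congr rfl fun i _ => ?_
            rw [hv i, Finset.sum_mul]
            exact Finset.sum_congr rfl fun j _ => by ring
        _ = 0 := h2
    rw [← hx]
    simp [hx0]
  · -- Part 2: lower bound on LCD embeddings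
    rintro N Ct ⟨hLCD, f, hf, hmap⟩
    have hn : n ≤ N := by simpa using Fintype.card_le_of_injective f hf
    set π₀ : Ct →ₗ[F] (Fin n → F) := (LinearMap.funLeft F F f).comp Ct.subtype with hπ₀def
    have hπ₀ : LinearMap.range π₀ = C := by
      rw [hπ₀def, LinearMap.range_comp, Submodule.range_subtype, hmap]
    set π : Ct →ₗ[F] C := π₀.codRestrict C
      (fun x => hπ₀ ▸ LinearMap.mem_range_self π₀ x) with hπdef
    have hπsurj : LinearMap.range π = ⊤ := by
      rw [LinearMap.range_eq_top]
      rintro ⟨c, hc⟩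
      rw [← hπ₀] at hc
      obtain ⟨x, hx⟩ := hc
      exact ⟨x, Subtype.ext hx⟩
    obtain ⟨g, hg⟩ := π.exists_rightInverse_of_surjective hπsurj
    have hπg : ∀ c : C, π (g c) = c := fun c => by
      have := congrArg (fun h => h c) hg; simpa using this
    set T : C →ₗ[F] ({i : Fin N // i ∉ Set.range f} → F) :=
      (LinearMap.funLeft F F (Subtype.val)).comp (Ct.subtype.comp g) with hTdef
    have hTinj : Function.Injective T := by
      rw [← LinearMap.ker_eq_bot, Submodule.eq_bot_iff]
      intro c hc
      rw [LinearMap.mem_ker] at hc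
      set w : Fin N → F := (g c : Fin N → F) with hwdef
      have hw0 : ∀ i, i ∉ Set.range f → w i = 0 := by
        intro i hi
        have := congrFun hc ⟨i, hi⟩
        simpa [hTdef] using this
      have hwc : ∀ j, w (f j) = (c : Fin n → F) j := by
        intro j
        have h' := congrFun (Subtype.ext_iff.mp (hπg c)) j
        simpa [hπdef, hπ₀def, LinearMap.funLeft, hwdef] using h'
      have hwdual : w ∈ sDual (id : F → F) Ct := by
        intro y hy
        have hy' : LinearMap.funLeft F F f y ∈ C := by
          rw [← hmap]; exact Submodule.mem_map_of_mem hy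
        have hsplit : ∑ i, w i * y i = ∑ i ∈ Finset.univ.image f, w i * y i := by
          refine (Finset.sum_subset (Finset.subset_univ _) ?_).symm
          intro i _ hi
          have : i ∉ Set.range f := by
            simpa [Set.mem_range, Finset.mem_image] using hi
          rw [hw0 i this, zero_mul]
        have himg : ∑ i ∈ Finset.univ.image f, w i * y i = ∑ j, w (f j) * y (f j) :=
          Finset.sum_image (fun a _ b _ hab => hf hab)
        have hfin : ∑ j, (c : Fin n → F) j * y (f j) = 0 := by
          have := hso c.2 _ hy'
          simpa [LinearMap.funLeft] using this
        simp only [id]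
        rw [hsplit, himg]
        rw [Finset.sum_congr rfl fun j _ => by rw [hwc j]]
        exact hfin
      have hwmem : w ∈ sHull (id : F → F) Ct := ⟨(g c).2, hwdual⟩
      rw [hLCD] at hwmem
      have hw00 : w = 0 := by simpa using hwmem
      have hg0 : g c = 0 := Subtype.ext hw00
      have hcc : c = π (g c) := (hπg c).symm
      rw [hg0, map_zero] at hcc
      exact hcc
    have h1 : Module.finrank F C = ℓ := by
      rw [← hHC, rowSpace]
      simpa using finrank_span_eq_card hind
    have h2 : Module.finrank F ({i : Fin N // i ∉ Set.range f} → F) = N - n := by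
      rw [Module.finrank_pi]
      have hc : Fintype.card {i : Fin N // i ∈ Set.range f} = n := by
        exact ((Fintype.card_congr (Equiv.ofInjective f hf)).symm).trans (Fintype.card_fin n)
      rw [Fintype.card_subtype_compl, hc]
      simp
    have h3 := LinearMap.finrank_le_finrank_of_injective hTinj
    rw [h1, h2] at h3
    omega
end
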